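/- arXiv:1903.08425 — 3 statements merged into one kernel-verified Lean document; each statement's English description precedes it below -/
import Mathlib

section
/- If (J,S) is a K₃-trap, then J is isomorphic to K₃ and |S| ≤ 1. -/
open Classical SimpleGraph

/-- A class of (simple) graphs: a predicate on graphs over every vertex type. -/
abbrev GraphClass : Type 1 := ∀ (V : Type), SimpleGraph V → Prop

/-- `C` is closed under isomorphism. -/
def ClosedUnderIso (C : GraphClass) : Prop :=
  ∀ {V W : Type} (G : SimpleGraph V) (H : SimpleGraph W), Nonempty (G ≃g H) → C V G → C W H

/-- `C` is closed under taking subgraphs. -/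
def ClosedUnderSubgraphs (C : GraphClass) : Prop :=
  ∀ {V : Type} (G : SimpleGraph V) (H : G.Subgraph), C V G → C ↥H.verts H.coe

/-- `C` is closed under taking disjoint unions. -/
def ClosedUnderDisjointUnion (C : GraphClass) : Prop :=
  ∀ {V W : Type} (G : SimpleGraph V) (H : SimpleGraph W),
    C V G → C W H → C (V ⊕ W) (G.sum H)

/-- The edit distance from `G` to the (monotone) class `C`: the minimum number of
edges one needs to delete from `G` to obtain a graph in `C` (`⊤` if impossible). -/
noncomputable def editDist (C : GraphClass) {V : Type} (G : SimpleGraph V) : ℕ∞ :=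
  sInf {n : ℕ∞ | ∃ F : Set (Sym2 V), F ⊆ G.edgeSet ∧ C V (G.deleteEdges F) ∧ (F.ncard : ℕ∞) = n}

/-- The set of edges of `G` whose two ends receive distinct labels under `f`. -/
def crossEdges {V : Type} (G : SimpleGraph V) (f : V → ℕ) : Set (Sym2 V) :=
  {e | e ∈ G.edgeSet ∧ ∃ u v : V, e = s(u, v) ∧ f u ≠ f v}

/-- The `C`-edge-brittleness of `G`: the minimum, over partitions of `V(G)`
(given as labellings `f : V → ℕ`) all of whose parts induce subgraphs in `C`,
of the number of edges with ends in distinct parts. -/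
noncomputable def edgeBrittleness (C : GraphClass) {V : Type} (G : SimpleGraph V) : ℕ∞ :=
  sInf {n : ℕ∞ | ∃ f : V → ℕ,
    (∀ i : ℕ, C ↥(f ⁻¹' {i}) (G.induce (f ⁻¹' {i}))) ∧ ((crossEdges G f).ncard : ℕ∞) = n}

/-- Given a labelling `g` of the edges of `G`, the set of vertices incident with
edges in two distinct parts. -/
def brittleVertices {V : Type} (G : SimpleGraph V) (g : Sym2 V → ℕ) : Set V :=
  {v | ∃ e₁ e₂ : Sym2 V, e₁ ∈ G.edgeSet ∧ e₂ ∈ G.edgeSet ∧ v ∈ e₁ ∧ v ∈ e₂ ∧ g e₁ ≠ g e₂}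

/-- The vertices incident with an edge of `G` in part `i` of the edge labelling `g`. -/
def partSupport {V : Type} (G : SimpleGraph V) (g : Sym2 V → ℕ) (i : ℕ) : Set V :=
  {v | ∃ e ∈ G.edgeSet, g e = i ∧ v ∈ e}

/-- The subgraph of `G` induced by the edges in part `i` of the edge labelling `g`
(on its own vertex set: the vertices incident with those edges). -/
def partGraph {V : Type} (G : SimpleGraph V) (g : Sym2 V → ℕ) (i : ℕ) :
    SimpleGraph ↥(partSupport G g i) :=
  (SimpleGraph.fromEdgeSet {e | e ∈ G.edgeSet ∧ g e = i}).induce (partSupport G g i)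

/-- The `C`-vertex-brittleness of `G`: the minimum, over partitions of `E(G)`
(given as labellings `g : Sym2 V → ℕ`) all of whose parts induce subgraphs in `C`,
of the number of vertices incident with edges in distinct parts. -/
noncomputable def vertexBrittleness (C : GraphClass) {V : Type} (G : SimpleGraph V) : ℕ∞ :=
  sInf {n : ℕ∞ | ∃ g : Sym2 V → ℕ,
    (∀ i : ℕ, C ↥(partSupport G g i) (partGraph G g i)) ∧ ((brittleVertices G g).ncard : ℕ∞) = n}

/-- The `C̄`-capacity of `G`: the maximum number of pairwise edge-disjoint subgraphs
of `G`, none of which belongs to `C`. -/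
noncomputable def capacity (C : GraphClass) {V : Type} (G : SimpleGraph V) : ℕ∞ :=
  sSup {n : ℕ∞ | ∃ m : ℕ, (m : ℕ∞) = n ∧ ∃ H : Fin m → G.Subgraph,
    (∀ i j, i ≠ j → Disjoint (H i).edgeSet (H j).edgeSet) ∧
    (∀ i, ¬ C ↥(H i).verts (H i).coe)}

/-- The graph obtained from `G` by subdividing the edge `uv` once, using a new vertex. -/
def subdivideEdge {V : Type} (G : SimpleGraph V) (u v : V) : SimpleGraph (V ⊕ Unit) :=
  SimpleGraph.fromRel fun x y =>
    (∃ a b : V, x = Sum.inl a ∧ y = Sum.inl b ∧ G.Adj a b ∧ s(a, b) ≠ s(u, v)) ∨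
    (∃ a : V, x = Sum.inl a ∧ y = Sum.inr () ∧ (a = u ∨ a = v))

/-- A graph bundled with its vertex type. -/
def FGraph : Type 1 := Σ V : Type, SimpleGraph V

/-- `IsSubdivision G H` means `H` is (isomorphic to) a subdivision of `G`. -/
inductive IsSubdivision : FGraph → FGraph → Prop
  | of_iso {V W : Type} (G : SimpleGraph V) (H : SimpleGraph W) :
      Nonempty (G ≃g H) → IsSubdivision ⟨V, G⟩ ⟨W, H⟩
  | step {V : Type} (G : SimpleGraph V) {u v : V} (h : G.Adj u v) (H : FGraph) :
      IsSubdivision ⟨V ⊕ Unit, subdivideEdge G u v⟩ H → IsSubdivision ⟨V, G⟩ H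

/-- `H` is a topological minor of `G`: some subgraph of `G` is isomorphic to a
subdivision of `H`. -/
def IsTopMinor {W V : Type} (H : SimpleGraph W) (G : SimpleGraph V) : Prop :=
  ∃ S : G.Subgraph, IsSubdivision ⟨W, H⟩ ⟨↥S.verts, S.coe⟩

/-- An ideal: a class of graphs closed under isomorphism and topological minors. -/
def IsIdeal (C : GraphClass) : Prop :=
  ClosedUnderIso C ∧
  ∀ {V W : Type} (G : SimpleGraph V) (H : SimpleGraph W), IsTopMinor H G → C V G → C W H

/-- The image of vertex `v` in the `i`-th copy of `G` inside `Fan(G,S,k)`. -/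
noncomputable def fanMap {V : Type} (S : Set V) (k : ℕ) (i : Fin k) (v : V) :
    ↥S ⊕ (↥(Sᶜ : Set V) × Fin k) :=
  if h : v ∈ S then Sum.inl ⟨v, h⟩ else Sum.inr (⟨v, h⟩, i)

/-- `Fan G S k`: the graph obtained from `k` vertex-disjoint copies of `G` by
identifying, for each `v ∈ S`, all copies of `v` (and the copies of each edge of `G[S]`). -/
noncomputable def Fan {V : Type} (G : SimpleGraph V) (S : Set V) (k : ℕ) :
    SimpleGraph (↥S ⊕ (↥(Sᶜ : Set V) × Fin k)) :=
  SimpleGraph.fromRel fun x y =>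
    ∃ (i : Fin k) (a b : V), G.Adj a b ∧ x = fanMap S k i a ∧ y = fanMap S k i b

/-- The triangle `K₃`. -/
def K3 : SimpleGraph (Fin 3) := ⊤

/-- The complete graph `K₄`. -/
def K4 : SimpleGraph (Fin 4) := ⊤

/-- The complete bipartite graph `K_{2,n}`. -/
def K2n (n : ℕ) : SimpleGraph (Fin 2 ⊕ Fin n) := completeBipartiteGraph (Fin 2) (Fin n)

/-- The complete bipartite graph `K_{2,3}`. -/
def K23 : SimpleGraph (Fin 2 ⊕ Fin 3) := completeBipartiteGraph (Fin 2) (Fin 3)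

/-- The diamond `D = K₄ ∖ e`. -/
def Diamond : SimpleGraph (Fin 4) := (⊤ : SimpleGraph (Fin 4)).deleteEdges {s((0 : Fin 4), 1)}

/-- `K⁺_{2,3}`: `K_{2,3}` together with an edge joining the two degree-3 vertices. -/
def K23plus : SimpleGraph (Fin 2 ⊕ Fin 3) :=
  K23 ⊔ SimpleGraph.fromEdgeSet {s(Sum.inl 0, Sum.inl 1)}

/-- `W⁺_k`: the cycle on `2k` vertices together with a hub adjacent to the `k`
vertices in even position (the wheel with all rim edges subdivided). -/
def Wplus (k : ℕ) : SimpleGraph (Option (ZMod (2 * k))) :=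
  SimpleGraph.fromRel fun x y =>
    (∃ a : ZMod (2 * k), x = some a ∧ y = some (a + 1)) ∨
    (∃ a : ZMod (2 * k), x = none ∧ y = some a ∧ a.val % 2 = 0)

/-- An `H`-snare: a pair `(J,S)` with `H` a topological minor of `J`, `S` independent
in `J`, and `J ∖ S` connected. -/
def IsSnare {W V : Type} (H : SimpleGraph W) (J : SimpleGraph V) (S : Set V) : Prop :=
  IsTopMinor H J ∧ (∀ a ∈ S, ∀ b ∈ S, ¬ J.Adj a b) ∧ (J.induce Sᶜ).Connected

/-- Suppressing the vertex `v` in `J`: delete `v`, joining its (at most two) neighbours;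
for a degree 2 vertex `v` this is the contraction `J/v` of an edge incident with `v`. -/
def suppress {V : Type} (J : SimpleGraph V) (v : V) : SimpleGraph ↥({v}ᶜ : Set V) :=
  SimpleGraph.fromRel fun x y => J.Adj ↑x ↑y ∨ (J.Adj ↑x v ∧ J.Adj v ↑y)

/-- An `H`-trap: a minimal `H`-snare. -/
def IsTrap {W V : Type} (H : SimpleGraph W) (J : SimpleGraph V) (S : Set V) : Prop :=
  IsSnare H J S ∧
  (∀ J' : J.Subgraph, J' ≠ ⊤ → ¬ IsSnare H J'.coe {x : ↥J'.verts | ↑x ∈ S}) ∧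
  (∀ v : V, v ∉ S → (J.neighborSet v).ncard = 2 →
    ¬ IsSnare H (suppress J v) {x : ↥({v}ᶜ : Set V) | ↑x ∈ S})

/-- `G` has a tree-decomposition of width at most `w`. -/
def HasTreewidthLE {V : Type} (G : SimpleGraph V) (w : ℕ) : Prop :=
  ∃ (ι : Type) (_ : Fintype ι) (T : SimpleGraph ι) (β : ι → Set V),
    T.IsTree ∧
    (∀ u v : V, G.Adj u v → ∃ t : ι, u ∈ β t ∧ v ∈ β t) ∧
    (∀ v : V, (T.induce {t | v ∈ β t}).Connected) ∧
    (∀ t : ι, (β t).ncard ≤ w + 1)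

/-- A graph is 2-connected if it has more than 2 vertices and remains connected
after deleting any single vertex. -/
def TwoConnected {V : Type} (G : SimpleGraph V) : Prop :=
  2 < Nat.card V ∧ ∀ v : V, (G.induce {x | x ≠ v}).Connected

/-- The class of forests. -/
def ForestClass : GraphClass := fun _ G => G.IsAcyclic

/-- Outerplanar graphs: the graphs with no topological minor isomorphic to `K₄`
or `K_{2,3}`. -/
def Outerplanar {V : Type} (G : SimpleGraph V) : Prop :=
  ¬ IsTopMinor K4 G ∧ ¬ IsTopMinor K23 G

/-- The class of outerplanar graphs. -/
def OuterplanarClass : GraphClass := fun _ G => Outerplanar G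

/-- The graph of `σ(G,P)`: for the path (walk) `P = v₀v₁⋯v_m`, add new vertices
`u₀,…,u_{m-1}`, where `uᵢ` is adjacent exactly to `vᵢ` and `v_{i+1}`. -/
def sigmaGraph {V : Type} (G : SimpleGraph V) {a b : V} (P : G.Walk a b) :
    SimpleGraph (V ⊕ Fin P.length) :=
  SimpleGraph.fromRel fun x y =>
    (∃ p q : V, x = Sum.inl p ∧ y = Sum.inl q ∧ G.Adj p q) ∨
    (∃ (p : V) (i : Fin P.length), x = Sum.inl p ∧ y = Sum.inr i ∧
      (p = P.getVert i ∨ p = P.getVert (i + 1)))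

/-- The new path `P'` of `σ(G,P)` (from the `j`-th vertex of `P` on). -/
noncomputable def sigmaWalk {V : Type} (G : SimpleGraph V) {a b : V} (P : G.Walk a b)
    (j : ℕ) (h : j ≤ P.length) :
    (sigmaGraph G P).Walk (Sum.inl (P.getVert j)) (Sum.inl b) :=
  if hj : j = P.length then
    SimpleGraph.Walk.nil.copy (by rw [hj, SimpleGraph.Walk.getVert_length]) rfl
  else by
    have hlt : j < P.length := lt_of_le_of_ne h hj
    have adj1 : (sigmaGraph G P).Adj (Sum.inl (P.getVert j)) (Sum.inr ⟨j, hlt⟩) :=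
      ⟨by simp, Or.inl (Or.inr ⟨P.getVert j, ⟨j, hlt⟩, rfl, rfl, Or.inl rfl⟩)⟩
    have adj2 : (sigmaGraph G P).Adj (Sum.inr ⟨j, hlt⟩) (Sum.inl (P.getVert (j + 1))) :=
      ⟨by simp, Or.inr (Or.inr ⟨P.getVert (j + 1), ⟨j, hlt⟩, rfl, rfl, Or.inr rfl⟩)⟩
    exact SimpleGraph.Walk.cons adj1 (SimpleGraph.Walk.cons adj2 (sigmaWalk G P (j + 1) hlt))
  termination_by P.length - j
  decreasing_by omega

/-- A hemmed graph: a graph together with a walk in it. -/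
structure HGraph where
  V : Type
  G : SimpleGraph V
  a : V
  b : V
  P : G.Walk a b

/-- The operation `σ` on hemmed graphs. -/
noncomputable def HGraph.step (X : HGraph) : HGraph :=
  ⟨X.V ⊕ Fin X.P.length, sigmaGraph X.G X.P, Sum.inl X.a, Sum.inl X.b,
    (sigmaWalk X.G X.P 0 (Nat.zero_le _)).copy
      (by rw [SimpleGraph.Walk.getVert_zero]) rfl⟩

/-- Adding to `G` a new (apex) vertex adjacent exactly to the vertices in `X`. -/
def AddApex {V : Type} (G : SimpleGraph V) (X : Set V) : SimpleGraph (V ⊕ Unit) :=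
  SimpleGraph.fromRel fun x y =>
    (∃ p q : V, x = Sum.inl p ∧ y = Sum.inl q ∧ G.Adj p q) ∨
    (∃ p : V, x = Sum.inl p ∧ y = Sum.inr () ∧ p ∈ X)

/-- A hemmed graph `(G,P)` is outerplanar: `G` has an outerplanar drawing with `P`
on the boundary of the outer face; equivalently, the graph obtained by adding a new
vertex adjacent to all vertices of `P` is outerplanar. -/
def HemmedOuterplanar {V : Type} (G : SimpleGraph V) {a b : V} (P : G.Walk a b) : Prop :=
  Outerplanar (AddApex G {v | v ∈ P.support})


namespace K3Trap
open SimpleGraph Walk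

open SimpleGraph Walk

open SimpleGraph Walk

variable {V W : Type}

/-- Lift a walk along a vertex map that is adjacency-preserving on the walk's edges. -/
lemma exists_lift {G : SimpleGraph V} {H : SimpleGraph W} (f : V → W) :
    ∀ {a b : V} (d : G.Walk a b), (∀ x y, s(x,y) ∈ d.edges → H.Adj (f x) (f y)) →
    ∃ d' : H.Walk (f a) (f b), d'.support = d.support.map f ∧
      d'.edges = d.edges.map (Sym2.map f) := by
  intro a b d
  induction d with
  | nil => exact fun _ => ⟨Walk.nil, by simp, by simp⟩
  | cons h p ih =>
    intro hadj
    obtain ⟨d', hs, he⟩ := ih (fun x y hxy => hadj x y (by simp [hxy]))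
    refine ⟨Walk.cons (hadj _ _ (by simp)) d', by simp [hs], by simp [he]⟩

lemma exists_lift_isCycle {G : SimpleGraph V} {H : SimpleGraph W} (f : V → W)
    {a : V} (d : G.Walk a a) (hd : d.IsCycle)
    (hadj : ∀ x y, s(x,y) ∈ d.edges → H.Adj (f x) (f y))
    (hinj : ∀ x ∈ d.support, ∀ y ∈ d.support, f x = f y → x = y) :
    ∃ d' : H.Walk (f a) (f a), d'.IsCycle ∧ d'.support = d.support.map f ∧
      d'.edges = d.edges.map (Sym2.map f) := by
  obtain ⟨d', hs, he⟩ := exists_lift f d hadj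
  refine ⟨d', ?_, hs, he⟩
  rw [Walk.isCycle_def] at hd ⊢
  obtain ⟨ht, hn, hnd⟩ := hd
  refine ⟨?_, ?_, ?_⟩
  · -- trail: edges nodup
    rw [Walk.isTrail_def] at ht ⊢
    rw [he]
    refine List.Nodup.map_on ?_ ht
    intro e₁ he₁ e₂ he₂ heq
    induction e₁ with
    | h x y =>
      induction e₂ with
      | h p q =>
        simp only [Sym2.map_pair_eq, Sym2.eq, Sym2.rel_iff', Prod.mk.injEq,
          Prod.swap_prod_mk] at heq ⊢
        have hx := d.fst_mem_support_of_mem_edges he₁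
        have hy := d.snd_mem_support_of_mem_edges he₁
        have hp := d.fst_mem_support_of_mem_edges he₂
        have hq := d.snd_mem_support_of_mem_edges he₂
        rcases heq with ⟨h1, h2⟩ | ⟨h1, h2⟩
        · exact Or.inl ⟨hinj _ hx _ hp h1, hinj _ hy _ hq h2⟩
        · exact Or.inr ⟨hinj _ hx _ hq h1, hinj _ hy _ hp h2⟩
  · -- nonnil
    intro hnil
    apply hn
    have : d'.length = 0 := by
      have := Walk.length_edges d'
      rw [hnil] at this ⊢
      simp
    have hlen : d.length = 0 := by
      have h1 := Walk.length_edges d'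
      have h2 := Walk.length_edges d
      rw [he, List.length_map] at h1
      omega
    cases d with
    | nil => rfl
    | cons h p => simp at hlen
  · -- support tail nodup
    rw [hs]
    cases hsup : d.support with
    | nil => simp
    | cons x xs =>
      simp only [List.map_cons, List.tail_cons]
      refine List.Nodup.map_on ?_ (by rw [hsup] at hnd; simpa using hnd)
      intro p hp q hq
      have hp' : p ∈ d.support := by rw [hsup]; exact List.mem_cons_of_mem _ hp
      have hq' : q ∈ d.support := by rw [hsup]; exact List.mem_cons_of_mem _ hq
      exact hinj _ hp' _ hq'



lemma loop_nil {G : SimpleGraph V} {y : V} (q : G.Walk y y) (h : q.support.Nodup) : q.Nil := by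
  cases q with
  | nil => exact Walk.nil_nil
  | cons h' p =>
    exfalso
    simp only [Walk.support_cons, List.nodup_cons] at h
    exact h.1 p.end_mem_support

lemma edge_at_head {G : SimpleGraph V} {u b : V} (p : G.Walk u b) (hnd : p.support.Nodup)
    {e : Sym2 V} (he : e ∈ p.edges) (hu : u ∈ e) :
    ∃ (w : V) (h : G.Adj u w) (q : G.Walk w b), p = Walk.cons h q ∧ e = s(u, w) := by
  cases p with
  | nil => simp at he
  | cons h q =>
    rename_i w
    simp only [Walk.edges_cons, List.mem_cons] at he
    rcases he with he | he
    · exact ⟨w, h, q, rfl, he⟩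
    · exfalso
      simp only [Walk.support_cons, List.nodup_cons] at hnd
      induction e with
      | h x y =>
        rcases Sym2.mem_iff.mp hu with rfl | rfl
        · exact hnd.1 (q.fst_mem_support_of_mem_edges he)
        · exact hnd.1 (q.snd_mem_support_of_mem_edges he)

/-- Decomposition of a cycle at its basepoint. -/
lemma cycle_decomp {G : SimpleGraph V} {z : V} (c : G.Walk z z) (hc : c.IsCycle) :
    ∃ (x y : V) (hzx : G.Adj z x) (hyz : G.Adj y z) (pr : G.Walk x y),
      pr.support.Nodup ∧ z ∉ pr.support ∧ x ≠ y ∧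
      (∀ t, t ∈ c.support ↔ (t = z ∨ t ∈ pr.support)) ∧
      (∀ e, e ∈ c.edges ↔ (e = s(z,x) ∨ e = s(y,z) ∨ e ∈ pr.edges)) ∧
      (s(z,x) :: s(y,z) :: pr.edges).Nodup ∧
      pr.length + 2 = c.length := by
  have h3 := hc.three_le_length
  cases c with
  | nil => simp at h3
  | cons h₀ p =>
    rename_i x
    -- p : G.Walk x z
    cases p with
    | nil => simp at h3
    | cons h₁ p₁ =>
      obtain ⟨y, pr, hyz, hpc⟩ := Walk.exists_cons_eq_concat h₁ p₁
      rw [hpc] at h3 hc ⊢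
      rw [Walk.isCycle_def] at hc
      obtain ⟨ht, hn, hnd⟩ := hc
      rw [Walk.isTrail_def] at ht
      simp only [Walk.edges_cons, Walk.edges_concat] at ht
      simp only [Walk.support_cons, Walk.support_concat, List.tail_cons] at hnd
      have hprnd : pr.support.Nodup ∧ z ∉ pr.support := by
        rw [List.nodup_append] at hnd
        refine ⟨hnd.1, fun hz => ?_⟩
        exact hnd.2.2 _ hz _ (by simp) rfl
      have hxy : x ≠ y := by
        intro hxyeq
        subst hxyeq
        have := loop_nil pr hprnd.1
        have hlen : pr.length = 0 := Walk.nil_iff_length_eq.mp this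
        simp only [Walk.length_cons, Walk.length_concat] at h3
        omega
      have hednd : (s(z,x) :: s(y,z) :: pr.edges).Nodup := by
        have hperm : List.Perm (s(z,x) :: (pr.edges ++ [s(y,z)])) (s(z,x) :: s(y,z) :: pr.edges) :=
          List.Perm.cons _ (List.perm_append_singleton _ _)
        refine hperm.nodup ?_
        simpa [List.concat_eq_append] using ht
      refine ⟨x, y, h₀, hyz, pr, hprnd.1, hprnd.2, hxy, ?_, ?_, hednd, ?_⟩
      · intro t
        simp only [Walk.support_cons, Walk.support_concat, List.mem_cons, List.concat_eq_append,
          List.mem_append, List.mem_singleton]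
        constructor
        · rintro (rfl | h | h) <;> simp_all <;> tauto
        · rintro (rfl | h) <;> tauto
      · intro e
        simp only [Walk.edges_cons, Walk.edges_concat, List.mem_cons, List.concat_eq_append,
          List.mem_append, List.mem_singleton]
        constructor
        · rintro (rfl | h | h) <;> simp_all <;> tauto
        · rintro (rfl | rfl | h) <;> tauto
      · simp only [Walk.length_cons, Walk.length_concat]

/-- Decomposition of a cycle at any support vertex. -/
lemma rot_decomp {G : SimpleGraph V} {a : V} (c : G.Walk a a) (hc : c.IsCycle)
    (z : V) (hz : z ∈ c.support) :
    ∃ (x y : V) (hzx : G.Adj z x) (hyz : G.Adj y z) (pr : G.Walk x y),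
      pr.support.Nodup ∧ z ∉ pr.support ∧ x ≠ y ∧
      (∀ t, t ∈ c.support ↔ (t = z ∨ t ∈ pr.support)) ∧
      (∀ e, e ∈ c.edges ↔ (e = s(z,x) ∨ e = s(y,z) ∨ e ∈ pr.edges)) ∧
      (s(z,x) :: s(y,z) :: pr.edges).Nodup ∧
      pr.length + 2 = c.length := by
  classical
  set c' := c.rotate z hz with hc'def
  have hc' : c'.IsCycle := hc.rotate hz
  obtain ⟨x, y, hzx, hyz, pr, h1, h2, h3, h4, h5, h6, h7⟩ := cycle_decomp c' hc'
  have hsup : ∀ t, t ∈ c.support ↔ t ∈ c'.support := by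
    intro t
    have hrot := Walk.support_rotate c z hz
    have htail : ∀ {b : V} (w : G.Walk b b), ¬ w.Nil → ∀ (t : V), t ∈ w.support ↔ t ∈ w.support.tail := by
      intro b w hwn t
      cases w with
      | nil => exact absurd Walk.nil_nil hwn
      | cons h q =>
        simp only [Walk.support_cons, List.tail_cons, List.mem_cons]
        constructor
        · rintro (rfl | h') 
          · exact q.end_mem_support
          · exact h'
        · exact fun h' => Or.inr h'
    have hcn : ¬ c.Nil := by
      intro hn
      have := hc.three_le_length
      rw [Walk.nil_iff_length_eq.mp hn] at this
      omega
    have hc'n : ¬ c'.Nil := by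
      intro hn
      have := hc'.three_le_length
      rw [Walk.nil_iff_length_eq.mp hn] at this
      omega
    rw [htail c hcn t, htail c' hc'n t, hrot.mem_iff]
  have hedg : ∀ e, e ∈ c.edges ↔ e ∈ c'.edges := fun e => (Walk.rotate_edges c z hz).mem_iff.symm
  have hlen : c.length = c'.length := by
    have := (Walk.rotate_edges c z hz).perm.length_eq
    rw [Walk.length_edges, Walk.length_edges] at this
    exact this.symm
  exact ⟨x, y, hzx, hyz, pr, h1, h2, h3,
    fun t => (hsup t).trans (h4 t), fun e => (hedg e).trans (h5 e), h6, by omega⟩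



lemma not_edge_endpoints {G : SimpleGraph V} {x y : V} {pr : G.Walk x y}
    (hnd : pr.support.Nodup) (hxy : x ≠ y) (hlen : 2 ≤ pr.length) : s(x,y) ∉ pr.edges := by
  intro hmem
  obtain ⟨w, h, q, rfl, hew⟩ := edge_at_head pr hnd hmem (by simp)
  have hwy : w = y := by
    simp only [Sym2.eq, Sym2.rel_iff', Prod.mk.injEq, Prod.swap_prod_mk] at hew
    rcases hew with ⟨h1, h2⟩ | ⟨h1, h2⟩
    · exact h2.symm
    · exact absurd h2.symm hxy
  subst hwy
  have : q.Nil := loop_nil q (by simpa using hnd.of_cons)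
  have := Walk.nil_iff_length_eq.mp this
  simp only [Walk.length_cons] at hlen
  omega

lemma reachable_induce {G : SimpleGraph V} (U : Set V) {p q : V} (d : G.Walk p q)
    (hd : ∀ x ∈ d.support, x ∈ U) :
    (G.induce U).Reachable ⟨p, hd p d.start_mem_support⟩ ⟨q, hd q d.end_mem_support⟩ := by
  induction d with
  | nil => rfl
  | cons h r ih =>
    rename_i u v w
    have h1 : (G.induce U).Adj ⟨u, hd u (by simp)⟩ ⟨v, hd v (by simp)⟩ := h
    refine (h1.reachable).trans ?_
    exact ih (fun x hx => hd x (by simp [hx]))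

lemma connected_of_forall_reachable {G : SimpleGraph V} (x : V) (h : ∀ t, G.Reachable x t) :
    G.Connected := by
  have : Nonempty V := ⟨x⟩
  exact ⟨fun a b => (h a).symm.trans (h b)⟩

/-- A graph with a spanning cycle, minus at most one vertex, is connected. -/
lemma cycle_induce_connected {G : SimpleGraph V} {a : V} (c : G.Walk a a) (hc : c.IsCycle)
    (hspan : ∀ v : V, v ∈ c.support) (U : Set V) (hU : (Uᶜ : Set V).Subsingleton) :
    (G.induce U).Connected := by
  classical
  by_cases hne : (Uᶜ : Set V).Nonempty
  · obtain ⟨z, hzU⟩ := hne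
    have hUc : Uᶜ = {z} := hU.eq_singleton_of_mem hzU
    have hmemU : ∀ t, t ≠ z → t ∈ U := by
      intro t ht
      by_contra h
      have : t ∈ (Uᶜ : Set V) := h
      rw [hUc] at this
      exact ht this
    obtain ⟨x, y, hzx, hyz, pr, hnd, hzpr, hxy, hsup, hedg, hednd, hlen⟩ :=
      rot_decomp c hc z (hspan z)
    have hxU : x ∈ U := hmemU x hzx.ne'
    have hprU : ∀ t ∈ pr.support, t ∈ U := fun t ht => hmemU t (fun h => hzpr (h ▸ ht))
    refine connected_of_forall_reachable ⟨x, hxU⟩ (fun t => ?_)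
    have htpr : (t : V) ∈ pr.support := by
      have h1 := (hsup (t : V)).mp (hspan (t : V))
      rcases h1 with h1 | h1
      · exfalso
        have : (t : V) ∈ (Uᶜ : Set V) := by rw [hUc]; exact h1
        exact this t.prop
      · exact h1
    have := reachable_induce U (pr.takeUntil (t : V) htpr)
      (fun s hs => hprU s (pr.support_takeUntil_subset htpr hs))
    convert this using 2 <;> simp
  · have hUuniv : ∀ t : V, t ∈ U := by
      intro t
      by_contra h
      exact hne ⟨t, h⟩
    refine connected_of_forall_reachable ⟨a, hUuniv a⟩ (fun t => ?_)
    have := reachable_induce U (c.takeUntil (t : V) (hspan (t : V)))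
      (fun s _ => hUuniv s)
    convert this using 2 <;> simp



lemma subdivideEdge_adj_inl_inl {G : SimpleGraph V} {u v a b : V} :
    (subdivideEdge G u v).Adj (.inl a) (.inl b) ↔ (G.Adj a b ∧ s(a,b) ≠ s(u,v)) := by
  unfold subdivideEdge
  rw [SimpleGraph.fromRel_adj]
  constructor
  · rintro ⟨hne, h | h⟩ <;>
      rcases h with ⟨p, q, hp, hq, hadj, hne'⟩ | ⟨p, hp, hq, hor⟩
    · rw [Sum.inl.injEq] at hp hq
      subst hp; subst hq
      exact ⟨hadj, hne'⟩
    · exact absurd hq (by simp)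
    · rw [Sum.inl.injEq] at hp hq
      subst hp; subst hq
      exact ⟨hadj.symm, by rwa [Sym2.eq_swap] at hne'⟩
    · exact absurd hq (by simp)
  · rintro ⟨hadj, hne⟩
    exact ⟨by simpa using hadj.ne, Or.inl (Or.inl ⟨a, b, rfl, rfl, hadj, hne⟩)⟩

lemma subdivideEdge_adj_inl_inr {G : SimpleGraph V} {u v a : V} {t : Unit} :
    (subdivideEdge G u v).Adj (.inl a) (.inr t) ↔ (a = u ∨ a = v) := by
  unfold subdivideEdge
  rw [SimpleGraph.fromRel_adj]
  constructor
  · rintro ⟨hne, h | h⟩ <;>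
      rcases h with ⟨p, q, hp, hq, hadj, hne'⟩ | ⟨p, hp, hq, hor⟩
    · exact absurd hq (by simp)
    · rw [Sum.inl.injEq] at hp
      subst hp
      exact hor
    · exact absurd hp (by simp)
    · exact absurd hq (by simp)
  · intro hor
    exact ⟨by simp, Or.inl (Or.inr ⟨a, rfl, by simp, hor⟩)⟩

lemma subdivideEdge_adj_inr_inr {G : SimpleGraph V} {u v : V} {t t' : Unit} :
    ¬ (subdivideEdge G u v).Adj (.inr t) (.inr t') := by
  intro h
  have := h.ne
  simp only [ne_eq, Sum.inr.injEq] at this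
  exact this trivial

lemma subdivideEdge_adj_inr_inl {G : SimpleGraph V} {u v a : V} {t : Unit} :
    (subdivideEdge G u v).Adj (.inr t) (.inl a) ↔ (a = u ∨ a = v) := by
  rw [adj_comm]
  exact subdivideEdge_adj_inl_inr

/-- `subdivideEdge` respects isomorphisms. -/
noncomputable def subdivCongr {G : SimpleGraph V} {G' : SimpleGraph W} (e : G ≃g G') (u v : V) :
    subdivideEdge G u v ≃g subdivideEdge G' (e u) (e v) := by
  refine ⟨Equiv.sumCongr e.toEquiv (Equiv.refl Unit), ?_⟩
  have key : ∀ a b : V, (G'.Adj (e a) (e b) ∧ s(e a, e b) ≠ s(e u, e v)) ↔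
      (G.Adj a b ∧ s(a,b) ≠ s(u,v)) := by
    intro a b
    rw [← Sym2.map_pair_eq e, ← Sym2.map_pair_eq e, e.map_adj_iff]
    exact and_congr_right (fun _ => (Sym2.map.injective e.injective).ne_iff)
  intro a b
  rcases a with a | a <;> rcases b with b | b <;>
    simp only [Equiv.sumCongr_apply, Sum.map_inl, Sum.map_inr, Equiv.refl_apply,
      RelIso.coe_fn_toEquiv]
  · rw [subdivideEdge_adj_inl_inl, subdivideEdge_adj_inl_inl]
    exact key a b
  · rw [subdivideEdge_adj_inl_inr, subdivideEdge_adj_inl_inr]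
    exact or_congr e.toEquiv.apply_eq_iff_eq e.toEquiv.apply_eq_iff_eq
  · rw [subdivideEdge_adj_inr_inl, subdivideEdge_adj_inr_inl]
    exact or_congr e.toEquiv.apply_eq_iff_eq e.toEquiv.apply_eq_iff_eq
  · exact iff_of_false subdivideEdge_adj_inr_inr subdivideEdge_adj_inr_inr

lemma IsSubdivision.trans_iso : ∀ {A Y : FGraph}, IsSubdivision A Y → ∀ {Z : FGraph},
    Nonempty (Y.2 ≃g Z.2) → IsSubdivision A Z := by
  intro A Y h
  induction h with
  | of_iso G H i =>
    intro Z hz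
    obtain ⟨e⟩ := hz
    obtain ⟨i'⟩ := i
    exact IsSubdivision.of_iso _ _ ⟨i'.trans e⟩
  | step G hadj H hsub ih =>
    intro Z hz
    exact IsSubdivision.step _ ‹_› _ (ih hz)

lemma subdiv_up : ∀ {A Y : FGraph}, IsSubdivision A Y → ∀ (u v : Y.1) (huv : Y.2.Adj u v),
    IsSubdivision A ⟨Y.1 ⊕ Unit, subdivideEdge Y.2 u v⟩ := by
  intro A Y h
  induction h with
  | of_iso G H i =>
    intro u v huv
    obtain ⟨e⟩ := i
    have hadj' : G.Adj (e.symm u) (e.symm v) := by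
      rw [← e.map_adj_iff]
      simpa using huv
    refine IsSubdivision.step G hadj' _ (IsSubdivision.of_iso _ _ ⟨?_⟩)
    have := subdivCongr e (e.symm u) (e.symm v)
    simpa using this
  | step G hadj H hsub ih =>
    intro u v huv
    exact IsSubdivision.step _ ‹_› _ (ih u v huv)

/-- A graph with a spanning triangle is isomorphic to `K₃`. -/
lemma iso_K3_of_spanning_triangle {H : SimpleGraph W} {x : W} (d : H.Walk x x)
    (hd : d.IsCycle) (hlen : d.length = 3) (hV : ∀ w : W, w ∈ d.support)
    (hE : ∀ e ∈ H.edgeSet, e ∈ d.edges) : Nonempty (K3 ≃g H) := by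
  cases d with
  | nil => simp at hlen
  | cons h1 d1 =>
    rename_i b
    cases d1 with
    | nil => simp at hlen
    | cons h2 d2 =>
      rename_i c
      cases d2 with
      | nil => simp at hlen
      | cons h3 d3 =>
        rename_i z
        have hz : z = x := by
          cases d3 with
          | nil => rfl
          | cons h4 d4 => simp [Walk.length_cons] at hlen
        subst hz
        have hnil : d3 = Walk.nil := by
          cases d3 with
          | nil => rfl
          | cons h4 d4 => simp [Walk.length_cons] at hlen
        subst hnil
        have hnd : ([b, c, z] : List W).Nodup := by
          simpa using hd.support_nodup
        have hb' := (List.nodup_cons.mp hnd).1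
        have hc' := (List.nodup_cons.mp (List.nodup_cons.mp hnd).2).1
        have n3 : b ≠ c := fun h => hb' (by simp [h])
        have n2 : b ≠ z := fun h => hb' (by simp [h])
        have n5 : c ≠ z := fun h => hc' (by simp [h])
        have n1 : z ≠ b := n2.symm
        have n4 : c ≠ b := n3.symm
        have n6 : z ≠ c := n5.symm
        have hsup : ∀ w : W, w = z ∨ w = b ∨ w = c := by
          intro w
          have := hV w
          simp only [Walk.support_cons, Walk.support_nil, List.mem_cons,
            List.mem_singleton, List.not_mem_nil, or_false] at this
          tauto
        have hadj : ∀ p q : W, H.Adj p q ↔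
            (s(p,q) = s(z,b) ∨ s(p,q) = s(b,c) ∨ s(p,q) = s(c,z)) := by
          intro p q
          constructor
          · intro h
            have := hE s(p,q) ((SimpleGraph.mem_edgeSet H).mpr h)
            simp only [Walk.edges_cons, Walk.edges_nil, List.mem_cons,
              List.not_mem_nil, or_false, List.mem_singleton] at this
            tauto
          · intro h
            rcases h with h | h | h <;>
            · simp only [Sym2.eq, Sym2.rel_iff', Prod.mk.injEq, Prod.swap_prod_mk] at h
              rcases h with ⟨rfl, rfl⟩ | ⟨rfl, rfl⟩
              · first | exact h1 | exact h2 | exact h3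
              · first | exact h1.symm | exact h2.symm | exact h3.symm
        refine ⟨⟨⟨![z, b, c], fun w => if w = z then 0 else if w = b then 1 else 2,
          ?_, ?_⟩, ?_⟩⟩
        · intro i
          fin_cases i <;> simp [n2, n4, n5]
        · intro w
          rcases hsup w with rfl | rfl | rfl <;> simp [n2, n4, n5]
        · intro i j
          have hK3 : ∀ i j : Fin 3, K3.Adj i j ↔ i ≠ j := fun _ _ => Iff.rfl
          fin_cases i <;> fin_cases j <;>
            simp only [Equiv.coe_fn_mk, Matrix.cons_val_zero, Matrix.cons_val_one,
              Matrix.head_cons, hK3, hadj, ne_eq] <;>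
            simp [Sym2.eq, Sym2.rel_iff', Prod.mk.injEq, Prod.swap_prod_mk,
              n1, n2, n3, n4, n5, n6, Fin.ext_iff] <;>
            first
              | tauto
              | (constructor <;> tauto)

lemma isSubdivision_K3_of_spanning_cycle :
    ∀ (n : ℕ) {W : Type} {H : SimpleGraph W} {x : W} (d : H.Walk x x),
      d.IsCycle → d.length = n → (∀ w : W, w ∈ d.support) →
      (∀ e ∈ H.edgeSet, e ∈ d.edges) → IsSubdivision ⟨Fin 3, K3⟩ ⟨W, H⟩ := by
  intro n
  induction n using Nat.strong_induction_on with
  | _ n ih =>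
  intro W H x d hd hlen hV hE
  have h3 := hd.three_le_length
  by_cases h4 : d.length ≤ 3
  · exact IsSubdivision.of_iso _ _ (iso_K3_of_spanning_triangle d hd (by omega) hV hE)
  push_neg at h4
  obtain ⟨x₁, y, hzx, hyz, pr, hnd, hzpr, hxy, hsup, hedg, hednd, hlenpr⟩ := cycle_decomp d hd
  have hx₁ : x₁ ≠ x := hzx.ne'
  have hy : y ≠ x := hyz.ne
  set H' : SimpleGraph ↥({x}ᶜ : Set W) :=
    SimpleGraph.fromRel (fun s t => H.Adj ↑s ↑t ∨ ((s : W) = x₁ ∧ (t : W) = y)) with hH'def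
  have hfmem : ∀ (t : W), t ≠ x → t ∈ ({x}ᶜ : Set W) := fun t ht => by simp [ht]
  set f : W → ↥({x}ᶜ : Set W) :=
    fun t => if h : t = x then ⟨x₁, hfmem _ hx₁⟩ else ⟨t, hfmem _ h⟩ with hfdef
  have hfval : ∀ (t : W), t ≠ x → (f t : W) = t := by
    intro t ht
    simp [hfdef, ht]
  have hprx : ∀ t ∈ pr.support, t ≠ x := fun t ht h => hzpr (h ▸ ht)
  -- s(x₁, y) is not an edge of d
  have hxynd : s(x₁, y) ∉ d.edges := by
    intro hmem
    rcases (hedg _).mp hmem with h | h | h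
    · simp only [Sym2.eq, Sym2.rel_iff', Prod.mk.injEq, Prod.swap_prod_mk] at h
      rcases h with ⟨h1, h2⟩ | ⟨h1, h2⟩
      · exact hx₁ h1
      · exact hy h2
    · simp only [Sym2.eq, Sym2.rel_iff', Prod.mk.injEq, Prod.swap_prod_mk] at h
      rcases h with ⟨h1, h2⟩ | ⟨h1, h2⟩
      · exact hxy h1
      · exact hx₁ h1
    · exact not_edge_endpoints hnd hxy (by omega) h
  have hnadj : ¬ H.Adj x₁ y := fun h => hxynd (hE _ ((SimpleGraph.mem_edgeSet H).mpr h))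
  -- lift pr to H'
  have hadjlift : ∀ p q, s(p,q) ∈ pr.edges → H'.Adj (f p) (f q) := by
    intro p q hpq
    have hp := hprx _ (pr.fst_mem_support_of_mem_edges hpq)
    have hq := hprx _ (pr.snd_mem_support_of_mem_edges hpq)
    have hadj : H.Adj p q := pr.adj_of_mem_edges hpq
    rw [hH'def, SimpleGraph.fromRel_adj]
    refine ⟨?_, Or.inl (Or.inl (by rwa [hfval _ hp, hfval _ hq]))⟩
    intro hfeq
    exact hadj.ne (by rw [← hfval _ hp, ← hfval _ hq, hfeq])
  obtain ⟨d', hs', he'⟩ := exists_lift f pr hadjlift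
  have hfx₁ : (f x₁ : W) = x₁ := hfval _ hx₁
  have hfy : (f y : W) = y := hfval _ hy
  have hd'path : d'.IsPath := by
    rw [Walk.isPath_def, hs']
    refine List.Nodup.map_on ?_ hnd
    intro p hp q hq hpq
    rw [← hfval _ (hprx _ hp), ← hfval _ (hprx _ hq), hpq]
  have hxy' : H'.Adj (f y) (f x₁) := by
    rw [hH'def, SimpleGraph.fromRel_adj]
    refine ⟨?_, Or.inr (Or.inr ⟨hfx₁, hfy⟩)⟩
    intro hfeq
    exact hxy (by rw [← hfval _ hx₁, ← hfval _ hy, hfeq])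
  have hnotmem : s(f y, f x₁) ∉ d'.edges := by
    rw [he']
    intro hmem
    obtain ⟨e, hepr, heq⟩ := List.mem_map.mp hmem
    induction e with
    | h p q =>
      have hp := hprx _ (pr.fst_mem_support_of_mem_edges hepr)
      have hq := hprx _ (pr.snd_mem_support_of_mem_edges hepr)
      rw [Sym2.map_pair_eq] at heq
      have hpq : s(p, q) = s(y, x₁) := by
        have := congrArg (Sym2.map (Subtype.val : ↥({x}ᶜ : Set W) → W)) heq
        rwa [Sym2.map_pair_eq, Sym2.map_pair_eq, hfval _ hp, hfval _ hq, hfx₁, hfy] at this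
      apply hxynd
      have hpq' : s(p, q) = s(x₁, y) := hpq.trans (Sym2.eq_swap)
      rw [← hpq']
      exact (hedg _).mpr (Or.inr (Or.inr hepr))
  have hc'cyc : (Walk.cons hxy' d').IsCycle := Path.cons_isCycle ⟨d', hd'path⟩ hxy' hnotmem
  have hc'span : ∀ w' : ↥({x}ᶜ : Set W), w' ∈ (Walk.cons hxy' d').support := by
    intro w'
    have hw'x : (w' : W) ≠ x := by
      have := w'.2
      simp only [Set.mem_compl_iff, Set.mem_singleton_iff] at this
      exact this
    have : (w' : W) ∈ pr.support := by
      rcases (hsup _).mp (hV (w' : W)) with h | h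
      · exact absurd h hw'x
      · exact h
    rw [Walk.support_cons, hs']
    refine List.mem_cons_of_mem _ (List.mem_map.mpr ⟨(w' : W), this, ?_⟩)
    ext
    exact hfval _ hw'x
  have hc'edges : ∀ e ∈ H'.edgeSet, e ∈ (Walk.cons hxy' d').edges := by
    intro e he
    induction e with
    | h s t =>
      rw [SimpleGraph.mem_edgeSet, hH'def, SimpleGraph.fromRel_adj] at he
      obtain ⟨hne, hrel⟩ := he
      have hsx : (s : W) ≠ x := by
        have := s.2; simp only [Set.mem_compl_iff, Set.mem_singleton_iff] at this; exact this
      have htx : (t : W) ≠ x := by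
        have := t.2; simp only [Set.mem_compl_iff, Set.mem_singleton_iff] at this; exact this
      have hmain : ∀ (a b : ↥({x}ᶜ : Set W)), H.Adj ↑a ↑b → s(a, b) ∈ (Walk.cons hxy' d').edges := by
        intro a b hab
        have hax : (a : W) ≠ x := by
          have := a.2; simp only [Set.mem_compl_iff, Set.mem_singleton_iff] at this; exact this
        have hbx : (b : W) ≠ x := by
          have := b.2; simp only [Set.mem_compl_iff, Set.mem_singleton_iff] at this; exact this
        have hmem : s((a : W), (b : W)) ∈ d.edges := hE _ ((SimpleGraph.mem_edgeSet H).mpr hab)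
        rcases (hedg _).mp hmem with h | h | h
        · exfalso
          simp only [Sym2.eq, Sym2.rel_iff', Prod.mk.injEq, Prod.swap_prod_mk] at h
          rcases h with ⟨h1, h2⟩ | ⟨h1, h2⟩
          · exact hax h1
          · exact hbx h2
        · exfalso
          simp only [Sym2.eq, Sym2.rel_iff', Prod.mk.injEq, Prod.swap_prod_mk] at h
          rcases h with ⟨h1, h2⟩ | ⟨h1, h2⟩
          · exact hbx h2
          · exact hax h1
        · rw [Walk.edges_cons]
          refine List.mem_cons_of_mem _ ?_
          rw [he']
          refine List.mem_map.mpr ⟨s((a : W), (b : W)), h, ?_⟩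
          rw [Sym2.map_pair_eq]
          congr 1 <;> ext <;> simp [hfval _ hax, hfval _ hbx]
      rcases hrel with (h | ⟨h1, h2⟩) | (h | ⟨h1, h2⟩)
      · exact hmain s t h
      · have hseq : s = f x₁ := by ext; rw [hfx₁, h1]
        have hteq : t = f y := by ext; rw [hfy, h2]
        rw [hseq, hteq, Sym2.eq_swap]
        rw [Walk.edges_cons]
        exact List.mem_cons_self
      · rw [Sym2.eq_swap]
        exact hmain t s h
      · have hseq : s = f y := by ext; rw [hfy, h2]
        have hteq : t = f x₁ := by ext; rw [hfx₁, h1]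
        rw [hseq, hteq]
        rw [Walk.edges_cons]
        exact List.mem_cons_self
  have hd'len : d'.length = pr.length := by
    have h1 := Walk.length_edges d'
    have h2 := Walk.length_edges pr
    rw [he', List.length_map] at h1
    omega
  have hsubH' : IsSubdivision ⟨Fin 3, K3⟩ ⟨↥({x}ᶜ : Set W), H'⟩ := by
    refine ih ((Walk.cons hxy' d').length) ?_ (Walk.cons hxy' d') hc'cyc rfl hc'span hc'edges
    rw [Walk.length_cons, hd'len]
    omega
  have hadj' : H'.Adj (f x₁) (f y) := hxy'.symm
  have hstep := subdiv_up hsubH' (f x₁) (f y) hadj'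
  -- the isomorphism subdivideEdge H' (f x₁) (f y) ≃g H
  have hAdjx : ∀ t : W, H.Adj t x ↔ (t = x₁ ∨ t = y) := by
    intro t
    constructor
    · intro h
      have hmem : s(t, x) ∈ d.edges := hE _ ((SimpleGraph.mem_edgeSet H).mpr h)
      rcases (hedg _).mp hmem with h' | h' | h'
      · simp only [Sym2.eq, Sym2.rel_iff', Prod.mk.injEq, Prod.swap_prod_mk] at h'
        rcases h' with ⟨h1, h2⟩ | ⟨h1, h2⟩
        · exact absurd h1 h.ne
        · exact Or.inl h1
      · simp only [Sym2.eq, Sym2.rel_iff', Prod.mk.injEq, Prod.swap_prod_mk] at h'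
        rcases h' with ⟨h1, h2⟩ | ⟨h1, h2⟩
        · exact Or.inr h1
        · exact absurd h1 h.ne
      · exfalso
        exact hzpr (pr.snd_mem_support_of_mem_edges h')
    · rintro (rfl | rfl)
      · exact hzx.symm
      · exact hyz
  have hiso : Nonempty ((subdivideEdge H' (f x₁) (f y)) ≃g H) := by
    refine ⟨⟨⟨Sum.elim Subtype.val (fun _ => x), 
      fun w => if h : w = x then Sum.inr () else Sum.inl ⟨w, hfmem _ h⟩, ?_, ?_⟩, ?_⟩⟩
    · rintro (s | t)
      · have hsx : (s : W) ≠ x := by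
          have := s.2; simp only [Set.mem_compl_iff, Set.mem_singleton_iff] at this; exact this
        simp [hsx]
      · simp
    · intro w
      by_cases hw : w = x <;> simp [hw]
    · rintro (s | s) (t | t)
      · simp only [Equiv.coe_fn_mk, Sum.elim_inl]
        rw [subdivideEdge_adj_inl_inl]
        constructor
        · intro h
          refine ⟨?_, ?_⟩
          · rw [hH'def, SimpleGraph.fromRel_adj]
            exact ⟨fun heq => h.ne (congrArg Subtype.val heq), Or.inl (Or.inl h)⟩
          · intro heq
            simp only [Sym2.eq, Sym2.rel_iff', Prod.mk.injEq, Prod.swap_prod_mk] at heq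
            rcases heq with ⟨h1, h2⟩ | ⟨h1, h2⟩
            · subst h1; subst h2
              rw [hfx₁, hfy] at h
              exact hnadj h
            · subst h1; subst h2
              rw [hfx₁, hfy] at h
              exact hnadj h.symm
        · rintro ⟨hH's, hne⟩
          rw [hH'def, SimpleGraph.fromRel_adj] at hH's
          obtain ⟨hne', hrel⟩ := hH's
          rcases hrel with (h | ⟨h1, h2⟩) | (h | ⟨h1, h2⟩)
          · exact h
          · exfalso
            apply hne
            have hseq : s = f x₁ := Subtype.ext (by rw [hfx₁]; exact h1)
            have hteq : t = f y := Subtype.ext (by rw [hfy]; exact h2)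
            rw [hseq, hteq]
          · exact h.symm
          · exfalso
            apply hne
            have hseq : s = f y := Subtype.ext (by rw [hfy]; exact h2)
            have hteq : t = f x₁ := Subtype.ext (by rw [hfx₁]; exact h1)
            rw [hseq, hteq, Sym2.eq_swap]
      · simp only [Equiv.coe_fn_mk, Sum.elim_inl, Sum.elim_inr]
        rw [subdivideEdge_adj_inl_inr, hAdjx]
        constructor
        · rintro (h | h)
          · left; ext; rw [hfx₁, h]
          · right; ext; rw [hfy, h]
        · rintro (rfl | rfl)
          · left; exact hfx₁.symm ▸ rfl
          · right; exact hfy.symm ▸ rfl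
      · simp only [Equiv.coe_fn_mk, Sum.elim_inl, Sum.elim_inr]
        rw [subdivideEdge_adj_inr_inl]
        rw [SimpleGraph.adj_comm, hAdjx]
        constructor
        · rintro (h | h)
          · left; ext; rw [hfx₁, h]
          · right; ext; rw [hfy, h]
        · rintro (rfl | rfl)
          · left; exact hfx₁.symm ▸ rfl
          · right; exact hfy.symm ▸ rfl
      · simp only [Equiv.coe_fn_mk, Sum.elim_inr]
        constructor
        · intro h
          exact absurd rfl h.ne
        · intro h
          exact absurd h subdivideEdge_adj_inr_inr
  exact IsSubdivision.trans_iso hstep hiso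

lemma not_mem_map_inl_edges {l : List (Sym2 V)} {w : V} {t : Unit} :
    s(Sum.inl w, Sum.inr t) ∉ l.map (Sym2.map (Sum.inl : V → V ⊕ Unit)) := by
  intro hmem
  obtain ⟨e, he, heq⟩ := List.mem_map.mp hmem
  induction e with
  | h p q =>
    rw [Sym2.map_pair_eq] at heq
    simp only [Sym2.eq, Sym2.rel_iff', Prod.mk.injEq, Prod.swap_prod_mk] at heq
    rcases heq with ⟨h1, h2⟩ | ⟨h1, h2⟩ <;> simp_all

lemma isTopMinor_iff_ne : True := trivial

lemma exists_cycle_subdiv_aux {G : SimpleGraph V} {u x y : V} (hux : G.Adj u x)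
    (hyu : G.Adj y u) (pr : G.Walk x y) (hnds : pr.support.Nodup) (hu : u ∉ pr.support)
    (hxy : x ≠ y) (hnd3 : (s(u,x) :: s(y,u) :: pr.edges).Nodup) :
    ∃ (b : V ⊕ Unit) (c' : (subdivideEdge G u x).Walk b b), c'.IsCycle := by
  have hprx : ∀ t ∈ pr.support, t ≠ u := fun t ht h => hu (h ▸ ht)
  set q : G.Walk x u := pr.concat hyu with hqdef
  have hqadj : ∀ p p', s(p,p') ∈ q.edges → (subdivideEdge G u x).Adj (.inl p) (.inl p') := by
    intro p p' hpq
    rw [hqdef, Walk.edges_concat, List.concat_eq_append, List.mem_append,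
      List.mem_singleton] at hpq
    rw [subdivideEdge_adj_inl_inl]
    rcases hpq with h | h
    · refine ⟨pr.adj_of_mem_edges h, ?_⟩
      intro heq
      apply hprx _ (pr.fst_mem_support_of_mem_edges h)
      -- u ∈ s(p,p') = s(u,x): so p = u or p' = u
      simp only [Sym2.eq, Sym2.rel_iff', Prod.mk.injEq, Prod.swap_prod_mk] at heq
      rcases heq with ⟨h1, h2⟩ | ⟨h1, h2⟩
      · exact h1
      · exact absurd h2 (hprx _ (pr.snd_mem_support_of_mem_edges h))
    · simp only [Sym2.eq, Sym2.rel_iff', Prod.mk.injEq, Prod.swap_prod_mk] at h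
      rcases h with ⟨rfl, rfl⟩ | ⟨rfl, rfl⟩
      · refine ⟨hyu, ?_⟩
        intro heq
        simp only [Sym2.eq, Sym2.rel_iff', Prod.mk.injEq, Prod.swap_prod_mk] at heq
        rcases heq with ⟨h1, h2⟩ | ⟨h1, h2⟩
        · exact hyu.ne h1
        · exact hxy h1.symm
      · refine ⟨hyu.symm, ?_⟩
        intro heq
        simp only [Sym2.eq, Sym2.rel_iff', Prod.mk.injEq, Prod.swap_prod_mk] at heq
        rcases heq with ⟨h1, h2⟩ | ⟨h1, h2⟩
        · exact hxy h2.symm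
        · exact hux.ne h1
  obtain ⟨L, hLs, hLe⟩ := exists_lift (Sum.inl : V → V ⊕ Unit) q hqadj
  have hA : (subdivideEdge G u x).Adj (.inl u) (.inr ()) :=
    subdivideEdge_adj_inl_inr.mpr (Or.inl rfl)
  have hB : (subdivideEdge G u x).Adj (.inr ()) (.inl x) :=
    subdivideEdge_adj_inr_inl.mpr (Or.inr rfl)
  refine ⟨Sum.inl u, Walk.cons hA (Walk.cons hB L), ?_⟩
  have hqsup : q.support = pr.support ++ [u] := by
    rw [hqdef, Walk.support_concat]
  have hqed : q.edges = pr.edges ++ [s(y,u)] := by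
    rw [hqdef, Walk.edges_concat, List.concat_eq_append]
  have hqednd : q.edges.Nodup := by
    rw [hqed]
    simp only [List.nodup_cons, List.mem_cons] at hnd3
    rw [List.nodup_append]
    refine ⟨hnd3.2.2, by simp, ?_⟩
    intro e he b he' heq
    rw [List.mem_singleton] at he'
    subst he'
    exact hnd3.2.1 (heq ▸ he)
  rw [Walk.isCycle_def]
  refine ⟨?_, by simp, ?_⟩
  · rw [Walk.isTrail_def]
    simp only [Walk.edges_cons, List.nodup_cons, List.mem_cons]
    refine ⟨?_, ?_, ?_⟩
    · push_neg
      constructor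
      · intro heq
        simp [Sym2.eq, Sym2.rel_iff', Prod.mk.injEq, Prod.swap_prod_mk, hux.ne] at heq
      · rw [hLe]
        exact not_mem_map_inl_edges
    · rw [hLe, Sym2.eq_swap]
      exact not_mem_map_inl_edges
    · rw [hLe]
      exact List.Nodup.map (Sym2.map.injective Sum.inl_injective) hqednd
  · simp only [Walk.support_cons, List.tail_cons, List.nodup_cons]
    constructor
    · rw [hLs]
      intro hmem
      obtain ⟨t, ht, heq⟩ := List.mem_map.mp hmem
      simp at heq
    · rw [hLs]
      refine List.Nodup.map Sum.inl_injective ?_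
      rw [hqsup, List.nodup_append]
      refine ⟨hnds, by simp, ?_⟩
      intro t ht b ht' heq
      rw [List.mem_singleton] at ht'
      subst ht'
      exact hprx _ ht heq

lemma exists_cycle_subdivideEdge {G : SimpleGraph V} {u v : V} {a : V}
    (c : G.Walk a a) (hc : c.IsCycle) (huv : G.Adj u v) :
    ∃ (b : V ⊕ Unit) (c' : (subdivideEdge G u v).Walk b b), c'.IsCycle := by
  by_cases hmem : s(u, v) ∈ c.edges
  · have hu : u ∈ c.support := c.fst_mem_support_of_mem_edges hmem
    obtain ⟨x, y, hzx, hyz, pr, hnd, hzpr, hxy, hsup, hedg, hednd, hlen⟩ :=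
      rot_decomp c hc u hu
    rcases (hedg _).mp hmem with h | h | h
    · -- v = x
      have hvx : v = x := by
        simp only [Sym2.eq, Sym2.rel_iff', Prod.mk.injEq, Prod.swap_prod_mk] at h
        rcases h with ⟨h1, h2⟩ | ⟨h1, h2⟩
        · exact h2
        · exact absurd h2.symm huv.ne
      subst hvx
      exact exists_cycle_subdiv_aux hzx hyz pr hnd hzpr hxy hednd
    · -- v = y
      have hvy : v = y := by
        simp only [Sym2.eq, Sym2.rel_iff', Prod.mk.injEq, Prod.swap_prod_mk] at h
        rcases h with ⟨h1, h2⟩ | ⟨h1, h2⟩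
        · exact absurd h2.symm huv.ne
        · exact h2
      subst hvy
      have hnd3' : (s(u, v) :: s(x, u) :: pr.reverse.edges).Nodup := by
        obtain ⟨ha, hrest⟩ := List.nodup_cons.mp hednd
        obtain ⟨hb, hc⟩ := List.nodup_cons.mp hrest
        refine List.nodup_cons.mpr ⟨?_, List.nodup_cons.mpr ⟨?_, ?_⟩⟩
        · intro hmem'
          rw [List.mem_cons, Walk.edges_reverse, List.mem_reverse] at hmem'
          rcases hmem' with h' | h'
          · simp only [Sym2.eq, Sym2.rel_iff', Prod.mk.injEq, Prod.swap_prod_mk] at h'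
            rcases h' with ⟨h1, h2⟩ | ⟨h1, h2⟩
            · exact hzx.ne h1
            · exact hxy h2.symm
          · exact hb (by rw [Sym2.eq_swap]; exact h')
        · rw [Walk.edges_reverse, List.mem_reverse]
          intro h'
          apply ha
          rw [List.mem_cons]
          right
          rwa [Sym2.eq_swap]
        · rw [Walk.edges_reverse]
          exact List.nodup_reverse.mpr hc
      exact exists_cycle_subdiv_aux hyz.symm hzx.symm pr.reverse
        (by rw [Walk.support_reverse]; exact List.nodup_reverse.mpr hnd)
        (by rw [Walk.support_reverse]; simpa using hzpr)
        hxy.symm hnd3'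
    · exfalso
      exact hzpr (pr.fst_mem_support_of_mem_edges h)
  · -- lift the whole cycle
    obtain ⟨c', hcyc, _, _⟩ := exists_lift_isCycle (Sum.inl : V → V ⊕ Unit) c hc
      (fun p q hpq => subdivideEdge_adj_inl_inl.mpr
        ⟨c.adj_of_mem_edges hpq, fun heq => hmem (heq ▸ hpq)⟩)
      (fun p _ q _ h => Sum.inl_injective h)
    exact ⟨Sum.inl a, c', hcyc⟩

lemma exists_cycle_of_isSubdivision : ∀ {X Y : FGraph}, IsSubdivision X Y →
    (∃ (p : X.1) (c : X.2.Walk p p), c.IsCycle) → ∃ (q : Y.1) (c : Y.2.Walk q q), c.IsCycle := by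
  intro X Y h
  induction h with
  | of_iso G H i =>
    rintro ⟨p, c, hc⟩
    obtain ⟨e⟩ := i
    exact ⟨e p, c.map e.toHom, (Walk.map_isCycle_iff_of_injective e.injective).mpr hc⟩
  | step G hadj H hsub ih =>
    rintro ⟨p, c, hc⟩
    exact ih (exists_cycle_subdivideEdge c hc ‹_›)

lemma K3_has_cycle : ∃ (p : Fin 3) (c : K3.Walk p p), c.IsCycle := by
  have h01 : K3.Adj 0 1 := (SimpleGraph.top_adj 0 1).mpr (by decide)
  have h12 : K3.Adj 1 2 := (SimpleGraph.top_adj 1 2).mpr (by decide)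
  have h20 : K3.Adj 2 0 := (SimpleGraph.top_adj 2 0).mpr (by decide)
  refine ⟨0, Walk.cons h01 (Walk.cons h12 (Walk.cons h20 Walk.nil)), ?_⟩
  rw [Walk.isCycle_def]
  refine ⟨?_, by simp, ?_⟩
  · rw [Walk.isTrail_def]
    simp only [Walk.edges_cons, Walk.edges_nil]
    decide
  · simp only [Walk.support_cons, Walk.support_nil, List.tail_cons]
    decide

lemma exists_cycle_of_isTopMinor_K3 {G : SimpleGraph V} (h : IsTopMinor K3 G) :
    ∃ (a : V) (c : G.Walk a a), c.IsCycle := by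
  obtain ⟨C, hC⟩ := h
  obtain ⟨q, c, hc⟩ := exists_cycle_of_isSubdivision hC K3_has_cycle
  refine ⟨(q : V), c.map C.hom, ?_⟩
  exact (Walk.map_isCycle_iff_of_injective Subtype.val_injective).mpr hc

/-- Any graph containing a cycle has `K₃` as a topological minor. -/
lemma isTopMinor_K3_of_cycle {G : SimpleGraph V} {a : V} (c : G.Walk a a) (hc : c.IsCycle) :
    IsTopMinor K3 G := by
  classical
  set C := c.toSubgraph with hCdef
  have hmem : ∀ t ∈ c.support, t ∈ C.verts := fun t ht => (c.mem_verts_toSubgraph).mpr ht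
  set f : V → ↥C.verts := fun t => if h : t ∈ c.support then ⟨t, hmem t h⟩
    else ⟨a, c.start_mem_verts_toSubgraph⟩ with hfdef
  have hfval : ∀ t ∈ c.support, ((f t : ↥C.verts) : V) = t := by
    intro t ht
    simp [hfdef, ht]
  have hadj : ∀ p q, s(p,q) ∈ c.edges → C.coe.Adj (f p) (f q) := by
    intro p q hpq
    have hp := c.fst_mem_support_of_mem_edges hpq
    have hq := c.snd_mem_support_of_mem_edges hpq
    have : C.Adj p q := by
      rw [← SimpleGraph.Subgraph.mem_edgeSet, hCdef]
      exact (c.mem_edges_toSubgraph).mpr hpq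
    show C.Adj _ _
    rwa [hfval p hp, hfval q hq]
  obtain ⟨c', hcyc, hs', he'⟩ := exists_lift_isCycle f c hc hadj
    (fun p hp q hq hfeq => by rw [← hfval p hp, ← hfval q hq, hfeq])
  refine ⟨C, isSubdivision_K3_of_spanning_cycle c'.length c' hcyc rfl ?_ ?_⟩
  · intro w
    have hw : (w : V) ∈ c.support := (c.mem_verts_toSubgraph).mp w.2
    rw [hs']
    refine List.mem_map.mpr ⟨(w : V), hw, ?_⟩
    ext
    exact hfval _ hw
  · intro e he
    induction e with
    | h s t =>
      rw [SimpleGraph.mem_edgeSet] at he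
      have : C.Adj (s : V) (t : V) := he
      have hst : s((s : V), (t : V)) ∈ c.edges := by
        rw [← c.mem_edges_toSubgraph]
        exact SimpleGraph.Subgraph.mem_edgeSet.mpr this
      rw [he']
      refine List.mem_map.mpr ⟨s((s : V), (t : V)), hst, ?_⟩
      rw [Sym2.map_pair_eq]
      congr 1 <;> ext <;>
        simp [hfval _ (c.fst_mem_support_of_mem_edges hst),
          hfval _ (c.snd_mem_support_of_mem_edges hst)]

lemma exists_spanning_cycle_toSubgraph {G : SimpleGraph V} {a : V} (c : G.Walk a a)
    (hc : c.IsCycle) :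
    ∃ (b : ↥c.toSubgraph.verts) (c' : c.toSubgraph.coe.Walk b b), c'.IsCycle ∧
      (∀ w : ↥c.toSubgraph.verts, w ∈ c'.support) ∧
      (∀ e ∈ c.toSubgraph.coe.edgeSet, e ∈ c'.edges) := by
  classical
  have hmem : ∀ t ∈ c.support, t ∈ c.toSubgraph.verts := fun t ht =>
    (c.mem_verts_toSubgraph).mpr ht
  set f : V → ↥c.toSubgraph.verts := fun t => if h : t ∈ c.support then ⟨t, hmem t h⟩
    else ⟨a, c.start_mem_verts_toSubgraph⟩ with hfdef
  have hfval : ∀ t ∈ c.support, ((f t : ↥c.toSubgraph.verts) : V) = t := by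
    intro t ht
    simp [hfdef, ht]
  have hadj : ∀ p q, s(p,q) ∈ c.edges → c.toSubgraph.coe.Adj (f p) (f q) := by
    intro p q hpq
    have hp := c.fst_mem_support_of_mem_edges hpq
    have hq := c.snd_mem_support_of_mem_edges hpq
    have : c.toSubgraph.Adj p q := by
      rw [← SimpleGraph.Subgraph.mem_edgeSet]
      exact (c.mem_edges_toSubgraph).mpr hpq
    show c.toSubgraph.Adj _ _
    rwa [hfval p hp, hfval q hq]
  obtain ⟨c', hcyc, hs', he'⟩ := exists_lift_isCycle f c hc hadj
    (fun p hp q hq hfeq => by rw [← hfval p hp, ← hfval q hq, hfeq])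
  refine ⟨f a, c', hcyc, ?_, ?_⟩
  · intro w
    have hw : (w : V) ∈ c.support := (c.mem_verts_toSubgraph).mp w.2
    rw [hs']
    refine List.mem_map.mpr ⟨(w : V), hw, ?_⟩
    ext
    exact hfval _ hw
  · intro e he
    induction e with
    | h s t =>
      rw [SimpleGraph.mem_edgeSet] at he
      have : c.toSubgraph.Adj (s : V) (t : V) := he
      have hst : s((s : V), (t : V)) ∈ c.edges := by
        rw [← c.mem_edges_toSubgraph]
        exact SimpleGraph.Subgraph.mem_edgeSet.mpr this
      rw [he']
      refine List.mem_map.mpr ⟨s((s : V), (t : V)), hst, ?_⟩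
      rw [Sym2.map_pair_eq]
      congr 1 <;> ext <;>
        simp [hfval _ (c.fst_mem_support_of_mem_edges hst),
          hfval _ (c.snd_mem_support_of_mem_edges hst)]

lemma snare_indep {G : SimpleGraph V} (J' : G.Subgraph) {S : Set V}
    (hind : ∀ a ∈ S, ∀ b ∈ S, ¬G.Adj a b) :
    ∀ a ∈ {x : ↥J'.verts | ↑x ∈ S}, ∀ b ∈ {x : ↥J'.verts | ↑x ∈ S}, ¬J'.coe.Adj a b :=
  fun a ha b hb hadj => hind _ ha _ hb (J'.adj_sub hadj)

end K3Trap

/-- Every `K₃`-trap `(J,S)` has `J ≅ K₃` and `|S| ≤ 1`. -/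
theorem K3_trap_classification (V : Type) [Fintype V] (J : SimpleGraph V) (S : Set V)
    (h : IsTrap K3 J S) :
    Nonempty (J ≃g K3) ∧ S.ncard ≤ 1 := by
  classical
  obtain ⟨⟨htm, hind, hconn⟩, hmin, hsupp⟩ := h
  obtain ⟨a, c, hc⟩ := K3Trap.exists_cycle_of_isTopMinor_K3 htm
  -- the induced subgraph on Sᶜ
  set JS : J.Subgraph :=
    { verts := Sᶜ
      Adj := fun x y => J.Adj x y ∧ x ∉ S ∧ y ∉ S
      adj_sub := fun h => h.1
      edge_vert := fun h => h.2.1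
      symm := ⟨fun x y h => ⟨h.1.symm, h.2.2, h.2.1⟩⟩ } with hJSdef
  -- Step 1: J = c.toSubgraph ⊔ JS
  set J₁ : J.Subgraph := c.toSubgraph ⊔ JS with hJ₁def
  have hJ₁verts : J₁.verts = c.toSubgraph.verts ∪ Sᶜ := rfl
  have hJ₁snare : IsSnare K3 J₁.coe {x : ↥J₁.verts | ↑x ∈ S} := by
    refine ⟨?_, K3Trap.snare_indep J₁ hind, ?_⟩
    · -- topological minor: lift the cycle c into J₁.coe
      have hv : ∀ t ∈ c.support, t ∈ J₁.verts := fun t ht =>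
        Or.inl ((c.mem_verts_toSubgraph).mpr ht)
      set f₁ : V → ↥J₁.verts := fun t => if h : t ∈ c.support then ⟨t, hv t h⟩
        else ⟨a, hv a c.start_mem_support⟩ with hf₁def
      have hf₁val : ∀ t ∈ c.support, ((f₁ t : ↥J₁.verts) : V) = t := by
        intro t ht; simp [hf₁def, ht]
      have hadj₁ : ∀ p q, s(p,q) ∈ c.edges → J₁.coe.Adj (f₁ p) (f₁ q) := by
        intro p q hpq
        have hp := c.fst_mem_support_of_mem_edges hpq
        have hq := c.snd_mem_support_of_mem_edges hpq
        have hCadj : c.toSubgraph.Adj p q := by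
          rw [← SimpleGraph.Subgraph.mem_edgeSet]
          exact (c.mem_edges_toSubgraph).mpr hpq
        show J₁.Adj _ _
        rw [hf₁val p hp, hf₁val q hq]
        exact SimpleGraph.Subgraph.sup_adj.mpr (Or.inl hCadj)
      obtain ⟨cyc₁, hcyc₁, _, _⟩ := K3Trap.exists_lift_isCycle f₁ c hc hadj₁
        (fun p hp q hq hfeq => by rw [← hf₁val p hp, ← hf₁val q hq, hfeq])
      exact K3Trap.isTopMinor_K3_of_cycle cyc₁ hcyc₁
    · -- connectivity
      have e₁ : (J₁.coe.induce {xx : ↥J₁.verts | ↑xx ∈ S}ᶜ) ≃g (J.induce Sᶜ) := by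
        refine ⟨⟨fun xx => ⟨(↑↑xx : V), xx.2⟩,
          fun t => ⟨⟨(t : V), Or.inr t.2⟩, t.2⟩, fun xx => rfl, fun t => rfl⟩, ?_⟩
        intro aa bb
        constructor
        · intro hadj
          show J₁.Adj _ _
          exact SimpleGraph.Subgraph.sup_adj.mpr (Or.inr ⟨hadj, aa.2, bb.2⟩)
        · intro hadj
          exact J₁.adj_sub hadj
      exact e₁.connected_iff.mpr hconn
  have hJ₁top : J₁ = ⊤ := by
    by_contra hne
    exact hmin J₁ hne hJ₁snare
  have hScover : ∀ v ∈ S, v ∈ c.support := by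
    intro v hv
    have : v ∈ J₁.verts := by rw [hJ₁top]; trivial
    rcases this with h' | h'
    · exact (c.mem_verts_toSubgraph).mp h'
    · exact absurd hv h'
  have hEdge : ∀ p q : V, J.Adj p q → s(p,q) ∈ c.edges ∨ (p ∉ S ∧ q ∉ S) := by
    intro p q hpq
    have : J₁.Adj p q := by rw [hJ₁top]; exact hpq
    rcases SimpleGraph.Subgraph.sup_adj.mp this with h' | h'
    · left
      rw [← c.mem_edges_toSubgraph]
      exact SimpleGraph.Subgraph.mem_edgeSet.mpr h'
    · right
      exact h'.2
  -- Step 2: S is a subsingleton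
  have hSsub : S.Subsingleton := by
    intro v hv s hs
    by_contra hne
    obtain ⟨x, y, hzx, hyz, pr, hnd, hvpr, hxy, hsup, hedg, hednd, hlen⟩ :=
      K3Trap.rot_decomp c hc v (hScover v hv)
    have hxS : x ∉ S := fun hxS => hind v hv x hxS hzx
    have hyS : y ∉ S := fun hyS => hind y hyS v hv hyz
    have hsv : s ≠ v := fun h' => hne h'.symm
    have hspr : s ∈ pr.support := by
      rcases (hsup s).mp (hScover s hs) with h' | h'
      · exact absurd h'.symm hne
      · exact h'
    set J₂ : J.Subgraph :=
      { verts := {v}ᶜ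
        Adj := fun p q => J.Adj p q ∧ p ≠ v ∧ q ≠ v
        adj_sub := fun h => h.1
        edge_vert := fun h => h.2.1
        symm := ⟨fun p q h => ⟨h.1.symm, h.2.2, h.2.1⟩⟩ } with hJ₂def
    have hJ₂ne : J₂ ≠ ⊤ := by
      intro heq
      have : v ∈ J₂.verts := by rw [heq]; trivial
      exact this rfl
    have hxv : x ∈ J₂.verts := hzx.ne'
    have hyv : y ∈ J₂.verts := hyz.ne
    -- two distinct paths from x to y in J₂.coe
    set g : V → ↥J₂.verts := fun t => if h : t = v then ⟨x, hxv⟩ else ⟨t, h⟩ with hgdef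
    have hgval : ∀ t : V, t ≠ v → ((g t : ↥J₂.verts) : V) = t := by
      intro t ht; simp [hgdef, ht]
    have hprv : ∀ t ∈ pr.support, t ≠ v := fun t ht h' => hvpr (h' ▸ ht)
    have hadj₂ : ∀ p q, s(p,q) ∈ pr.edges → J₂.coe.Adj (g p) (g q) := by
      intro p q hpq
      have hp := hprv _ (pr.fst_mem_support_of_mem_edges hpq)
      have hq := hprv _ (pr.snd_mem_support_of_mem_edges hpq)
      show J₂.Adj _ _
      rw [hgval p hp, hgval q hq]
      exact ⟨pr.adj_of_mem_edges hpq, hp, hq⟩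
    obtain ⟨L₁, hL₁s, hL₁e⟩ := K3Trap.exists_lift g pr hadj₂
    have hgx : g x = ⟨x, hxv⟩ := Subtype.ext (hgval x hzx.ne')
    have hgy : g y = ⟨y, hyv⟩ := Subtype.ext (hgval y hyz.ne)
    set L₁' := (L₁.copy hgx hgy) with hL₁'def
    have hL₁'path : L₁'.IsPath := by
      rw [Walk.isPath_def, hL₁'def, Walk.support_copy, hL₁s]
      refine List.Nodup.map_on ?_ hnd
      intro p hp q hq hpq
      rw [← hgval p (hprv p hp), ← hgval q (hprv q hq), hpq]
    -- second path through Sᶜ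
    obtain ⟨w₂⟩ := hconn ⟨x, hxS⟩ ⟨y, hyS⟩
    set g₂ : ↥(Sᶜ : Set V) → ↥J₂.verts := fun t => ⟨(t : V), fun h' => t.2 (h' ▸ hv)⟩
      with hg₂def
    have hadj₂' : ∀ p q, s(p,q) ∈ w₂.edges → J₂.coe.Adj (g₂ p) (g₂ q) := by
      intro p q hpq
      have : (J.induce Sᶜ).Adj p q := w₂.adj_of_mem_edges hpq
      have hJadj : J.Adj (p : V) (q : V) := this
      show J₂.Adj _ _
      exact ⟨hJadj, fun h' => p.2 (h' ▸ hv), fun h' => q.2 (h' ▸ hv)⟩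
    obtain ⟨L₂, hL₂s, hL₂e⟩ := K3Trap.exists_lift g₂ w₂ hadj₂'
    have hg₂x : g₂ ⟨x, hxS⟩ = ⟨x, hxv⟩ := rfl
    have hg₂y : g₂ ⟨y, hyS⟩ = ⟨y, hyv⟩ := rfl
    set L₂' := (L₂.copy hg₂x hg₂y).toPath with hL₂'def
    have hsmem : s ∈ ({v}ᶜ : Set V) := hsv
    have hsL₁ : (⟨s, hsmem⟩ : ↥J₂.verts) ∈ L₁'.support := by
      rw [hL₁'def, Walk.support_copy, hL₁s]
      refine List.mem_map.mpr ⟨s, hspr, ?_⟩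
      exact Subtype.ext (hgval s hsv)
    have hsL₂ : (⟨s, hsmem⟩ : ↥J₂.verts) ∉ L₂'.1.support := by
      intro hmem
      have := Walk.support_toPath_subset _ hmem
      rw [Walk.support_copy, hL₂s] at this
      obtain ⟨t, _, heq⟩ := List.mem_map.mp this
      have : (t : V) = s := congrArg Subtype.val heq
      exact t.2 (this ▸ hs)
    have hne12 : (⟨L₁', hL₁'path⟩ : J₂.coe.Path ⟨x, hxv⟩ ⟨y, hyv⟩) ≠ L₂' := by
      intro heq
      apply hsL₂
      have hval : L₁' = L₂'.1 := congrArg Subtype.val heq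
      rw [← hval]
      exact hsL₁
    have hnac : ¬ (J₂.coe).IsAcyclic := by
      intro hac
      exact hne12 (SimpleGraph.isAcyclic_iff_path_unique.mp hac _ _)
    have hcyc₂ : ∃ (u : ↥J₂.verts) (cc : J₂.coe.Walk u u), cc.IsCycle := by
      by_contra hno
      push_neg at hno
      exact hnac (fun u cc hcyc => hno u cc hcyc)
    obtain ⟨u, cc, hcc⟩ := hcyc₂
    have hJ₂snare : IsSnare K3 J₂.coe {x : ↥J₂.verts | ↑x ∈ S} := by
      refine ⟨K3Trap.isTopMinor_K3_of_cycle cc hcc, K3Trap.snare_indep J₂ hind, ?_⟩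
      have e₂ : (J₂.coe.induce {xx : ↥J₂.verts | ↑xx ∈ S}ᶜ) ≃g (J.induce Sᶜ) := by
        refine ⟨⟨fun xx => ⟨(↑↑xx : V), xx.2⟩,
          fun t => ⟨⟨(t : V), fun h' => t.2 (h' ▸ hv)⟩, t.2⟩, fun xx => rfl, fun t => rfl⟩, ?_⟩
        intro aa bb
        constructor
        · intro hadj
          show J₂.Adj _ _
          refine ⟨hadj, fun h' => aa.2 ?_, fun h' => bb.2 ?_⟩
          · show (↑(aa.1) : V) ∈ S
            rw [show (↑(aa.1) : V) = v from h']
            exact hv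
          · show (↑(bb.1) : V) ∈ S
            rw [show (↑(bb.1) : V) = v from h']
            exact hv
        · intro hadj
          exact J₂.adj_sub hadj
      exact e₂.connected_iff.mpr hconn
    exact hmin J₂ hJ₂ne hJ₂snare
  -- Step 3: J equals the cycle c
  have hJ₃snare : IsSnare K3 c.toSubgraph.coe {x : ↥c.toSubgraph.verts | ↑x ∈ S} := by
    obtain ⟨b, c', hc', hspan', hedges'⟩ := K3Trap.exists_spanning_cycle_toSubgraph c hc
    refine ⟨K3Trap.isTopMinor_K3_of_cycle c' hc', K3Trap.snare_indep _ hind, ?_⟩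
    refine K3Trap.cycle_induce_connected c' hc' hspan' _ ?_
    rw [compl_compl]
    intro p hp q hq
    exact Subtype.ext (hSsub hp hq)
  have hJ₃top : c.toSubgraph = ⊤ := by
    by_contra hne
    exact hmin c.toSubgraph hne hJ₃snare
  have hVsup : ∀ w : V, w ∈ c.support := fun w =>
    (c.mem_verts_toSubgraph).mp (by rw [hJ₃top]; trivial)
  have hEiff : ∀ p q : V, J.Adj p q ↔ s(p,q) ∈ c.edges := by
    intro p q
    constructor
    · intro hpq
      have : c.toSubgraph.Adj p q := by rw [hJ₃top]; exact hpq
      rw [← c.mem_edges_toSubgraph]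
      exact SimpleGraph.Subgraph.mem_edgeSet.mpr this
    · exact c.adj_of_mem_edges
  have hncard : S.ncard ≤ 1 := by
    rcases hSsub.eq_empty_or_singleton with rfl | ⟨a0, rfl⟩
    · simp
    · simp
  -- Step 4: the cycle has length 3
  have h3 := hc.three_le_length
  by_cases hlen3 : c.length = 3
  · have hE' : ∀ e ∈ J.edgeSet, e ∈ c.edges := by
      intro e he
      induction e with
      | h p q => exact (hEiff p q).mp ((SimpleGraph.mem_edgeSet J).mp he)
    obtain ⟨e⟩ := K3Trap.iso_K3_of_spanning_triangle c hc hlen3 hVsup hE'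
    exact ⟨⟨e.symm⟩, hncard⟩
  · -- length ≥ 4 : contradiction via suppression
    exfalso
    have h4 : 4 ≤ c.length := by omega
    -- find a vertex w outside S
    obtain ⟨w, hwS⟩ : ∃ w : V, w ∉ S := by
      by_cases haS : a ∈ S
      · obtain ⟨x0, y0, hax, _, _, _⟩ := K3Trap.rot_decomp c hc a c.start_mem_support
        exact ⟨x0, fun hxS => hind a haS x0 hxS hax⟩
      · exact ⟨a, haS⟩
    obtain ⟨x, y, hzx, hyz, pr, hnd, hwpr, hxy, hsup, hedg, hednd, hlen⟩ :=
      K3Trap.rot_decomp c hc w (hVsup w)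
    have hnbr : J.neighborSet w = {x, y} := by
      ext t
      simp only [SimpleGraph.mem_neighborSet, Set.mem_insert_iff, Set.mem_singleton_iff]
      constructor
      · intro hadj
        rcases (hedg _).mp ((hEiff w t).mp hadj) with h' | h' | h'
        · simp only [Sym2.eq, Sym2.rel_iff', Prod.mk.injEq, Prod.swap_prod_mk] at h'
          rcases h' with ⟨h1, h2⟩ | ⟨h1, h2⟩
          · exact Or.inl h2
          · exact absurd h2.symm hadj.ne
        · simp only [Sym2.eq, Sym2.rel_iff', Prod.mk.injEq, Prod.swap_prod_mk] at h'
          rcases h' with ⟨h1, h2⟩ | ⟨h1, h2⟩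
          · exact absurd h2.symm hadj.ne
          · exact Or.inr h2
        · exact absurd (pr.fst_mem_support_of_mem_edges h') hwpr
      · rintro (rfl | rfl)
        · exact hzx
        · exact hyz.symm
    have hdeg : (J.neighborSet w).ncard = 2 := by
      rw [hnbr]
      exact Set.ncard_pair hxy
    apply hsupp w hwS hdeg
    -- build the snare on suppress J w
    have hxw : x ∈ ({w}ᶜ : Set V) := by simp [hzx.ne']
    have hyw : y ∈ ({w}ᶜ : Set V) := by simp [hyz.ne]
    set gs : V → ↥({w}ᶜ : Set V) := fun t => if h : t = w then ⟨x, hxw⟩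
      else ⟨t, by simp [h]⟩ with hgsdef
    have hgsval : ∀ t : V, t ≠ w → ((gs t : ↥({w}ᶜ : Set V)) : V) = t := by
      intro t ht; simp [hgsdef, ht]
    have hprw : ∀ t ∈ pr.support, t ≠ w := fun t ht h' => hwpr (h' ▸ ht)
    have hadjs : ∀ p q, s(p,q) ∈ pr.edges → (suppress J w).Adj (gs p) (gs q) := by
      intro p q hpq
      have hp := hprw _ (pr.fst_mem_support_of_mem_edges hpq)
      have hq := hprw _ (pr.snd_mem_support_of_mem_edges hpq)
      have hJadj := pr.adj_of_mem_edges hpq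
      rw [suppress, SimpleGraph.fromRel_adj]
      refine ⟨?_, Or.inl (Or.inl (by rwa [hgsval p hp, hgsval q hq]))⟩
      intro heq
      exact hJadj.ne (by rw [← hgsval p hp, ← hgsval q hq, heq])
    obtain ⟨L, hLs, hLe⟩ := K3Trap.exists_lift gs pr hadjs
    have hLpath : L.IsPath := by
      rw [Walk.isPath_def, hLs]
      refine List.Nodup.map_on ?_ hnd
      intro p hp q hq hpq
      rw [← hgsval p (hprw p hp), ← hgsval q (hprw q hq), hpq]
    have hclose : (suppress J w).Adj (gs y) (gs x) := by
      rw [suppress, SimpleGraph.fromRel_adj]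
      refine ⟨?_, Or.inl (Or.inr ⟨?_, ?_⟩)⟩
      · intro heq
        exact hxy (by rw [← hgsval x hzx.ne', ← hgsval y hyz.ne, heq])
      · rw [hgsval y hyz.ne]; exact hyz
      · rw [hgsval x hzx.ne']; exact hzx
    have hnotm : s(gs y, gs x) ∉ L.edges := by
      rw [hLe]
      intro hmem
      obtain ⟨e, hepr, heq⟩ := List.mem_map.mp hmem
      induction e with
      | h p q =>
        have hp := hprw _ (pr.fst_mem_support_of_mem_edges hepr)
        have hq := hprw _ (pr.snd_mem_support_of_mem_edges hepr)
        rw [Sym2.map_pair_eq] at heq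
        have hpq : s(p, q) = s(y, x) := by
          have := congrArg (Sym2.map (Subtype.val : ↥({w}ᶜ : Set V) → V)) heq
          rwa [Sym2.map_pair_eq, Sym2.map_pair_eq, hgsval p hp, hgsval q hq,
            hgsval y hyz.ne, hgsval x hzx.ne'] at this
        have : s(x, y) ∈ pr.edges := by
          rw [show s(x,y) = s(y,x) from Sym2.eq_swap, ← hpq]
          exact hepr
        exact K3Trap.not_edge_endpoints hnd hxy (by omega) this
    have hcycs : (Walk.cons hclose L).IsCycle := Path.cons_isCycle ⟨L, hLpath⟩ hclose hnotm
    have hspans : ∀ t : ↥({w}ᶜ : Set V), t ∈ (Walk.cons hclose L).support := by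
      intro t
      have htw : (t : V) ≠ w := t.2
      have : (t : V) ∈ pr.support := by
        rcases (hsup _).mp (hVsup (t : V)) with h' | h'
        · exact absurd h' htw
        · exact h'
      rw [Walk.support_cons, hLs]
      refine List.mem_cons_of_mem _ (List.mem_map.mpr ⟨(t : V), this, ?_⟩)
      exact Subtype.ext (hgsval _ htw)
    refine ⟨K3Trap.isTopMinor_K3_of_cycle _ hcycs, ?_, ?_⟩
    · intro p hp q hq hadj
      have : (p : V) = (q : V) := hSsub hp hq
      have hpq : p = q := Subtype.ext this
      subst hpq
      exact hadj.ne rfl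
    · refine K3Trap.cycle_induce_connected _ hcycs hspans _ ?_
      rw [compl_compl]
      intro p hp q hq
      exact Subtype.ext (hSsub hp hq)
end

section
/- Let G be a graph, 𝒞 a monotone class of graphs, and P a path in G such that the subgraph of G induced by V(P) does not belong to 𝒞. Let (G',P') = σ(G,P). Then η_𝒞(G') ≥ η_𝒞(G) + 1. -/
open Classical SimpleGraph

section Aux

/-- If `G` embeds into `H` (injective map sending edges to edges), membership in a
monotone class transfers from `H` to `G`. -/
lemma closed_embed (C : GraphClass) (hiso : ClosedUnderIso C) (hsub : ClosedUnderSubgraphs C)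
    {V W : Type} (G : SimpleGraph V) (H : SimpleGraph W) (φ : V → W)
    (hinj : Function.Injective φ) (hadj : ∀ u v, G.Adj u v → H.Adj (φ u) (φ v))
    (hC : C W H) : C V G := by
  classical
  set S : H.Subgraph :=
    { verts := Set.range φ
      Adj := fun x y => ∃ u v, G.Adj u v ∧ x = φ u ∧ y = φ v
      adj_sub := by rintro x y ⟨u, v, huv, rfl, rfl⟩; exact hadj u v huv
      edge_vert := by rintro x y ⟨u, v, huv, rfl, rfl⟩; exact ⟨u, rfl⟩
      symm := ⟨by rintro x y ⟨u, v, huv, rfl, rfl⟩; exact ⟨v, u, huv.symm, rfl, rfl⟩⟩ } with hS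
  have hCS := hsub H S hC
  refine hiso _ _ ⟨?_⟩ hCS
  refine ⟨(Equiv.ofInjective φ hinj).symm, ?_⟩
  rintro ⟨x, u, rfl⟩ ⟨y, v, rfl⟩
  have e1 : (Equiv.ofInjective φ hinj).symm ⟨φ u, ⟨u, rfl⟩⟩ = u := by
    apply hinj; simp [Equiv.apply_ofInjective_symm]
  have e2 : (Equiv.ofInjective φ hinj).symm ⟨φ v, ⟨v, rfl⟩⟩ = v := by
    apply hinj; simp [Equiv.apply_ofInjective_symm]
  constructor
  · intro h
    have h' : G.Adj u v := by rwa [e1, e2] at h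
    exact ⟨u, v, h', rfl, rfl⟩
  · rintro ⟨u', v', huv, hx, hy⟩
    have hu : u = u' := hinj hx
    have hv : v = v' := hinj hy
    subst hu; subst hv
    rw [e1, e2]
    exact huv

variable {V : Type} {G : SimpleGraph V} {a b : V} {P : G.Walk a b}

lemma sigma_adj_inl {p q : V} :
    (sigmaGraph G P).Adj (Sum.inl p) (Sum.inl q) ↔ G.Adj p q := by
  constructor
  · rintro ⟨hne, h | h⟩ <;>
      rcases h with ⟨p', q', hp, hq, h⟩ | ⟨p', i, hp, hq, h⟩ <;>
      simp_all <;> exact h.symm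
  · intro h
    exact ⟨by simpa using h.ne, Or.inl (Or.inl ⟨p, q, rfl, rfl, h⟩)⟩

lemma sigma_adj_inr {i : Fin P.length} {p : V}
    (h : p = P.getVert i ∨ p = P.getVert (i + 1)) :
    (sigmaGraph G P).Adj (Sum.inl p) (Sum.inr i) :=
  ⟨by simp, Or.inl (Or.inr ⟨p, i, rfl, rfl, h⟩)⟩

end Aux

/-- If `C` is monotone, `P` is a path of `G` whose vertex set induces a
subgraph not in `C`, and `(G',P') = σ(G,P)`, then `η_C(G') ≥ η_C(G) + 1`. -/
theorem edgeBrittleness_sigma (C : GraphClass)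
    (hiso : ClosedUnderIso C) (hsub : ClosedUnderSubgraphs C)
    (V : Type) [Fintype V] (G : SimpleGraph V) (a b : V) (P : G.Walk a b)
    (hP : P.IsPath)
    (hPC : ¬ C ↥{v : V | v ∈ P.support} (G.induce {v : V | v ∈ P.support})) :
    edgeBrittleness C G + 1 ≤ edgeBrittleness C (sigmaGraph G P) := by
  classical
  set G' := sigmaGraph G P with hG'
  refine le_sInf ?_
  rintro n ⟨f', hparts', hcount⟩
  set f : V → ℕ := fun v => f' (Sum.inl v) with hf
  set A := crossEdges G f with hA
  set B := crossEdges G' f' with hB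
  -- there is a crossing edge incident with a subdivision vertex
  have key : ∃ e ∈ B, ∃ i : Fin P.length, (Sum.inr i : V ⊕ Fin P.length) ∈ e := by
    by_contra hno
    push_neg at hno
    have hstep : ∀ i : Fin P.length,
        f' (Sum.inl (P.getVert i)) = f' (Sum.inr i) ∧
        f' (Sum.inl (P.getVert (i + 1))) = f' (Sum.inr i) := by
      intro i
      have h1 : G'.Adj (Sum.inl (P.getVert i)) (Sum.inr i) := sigma_adj_inr (Or.inl rfl)
      have h2 : G'.Adj (Sum.inl (P.getVert (i + 1))) (Sum.inr i) := sigma_adj_inr (Or.inr rfl)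
      constructor
      · by_contra hne
        exact hno s(Sum.inl (P.getVert i), Sum.inr i)
          ⟨h1, _, _, rfl, hne⟩ i (by simp)
      · by_contra hne
        exact hno s(Sum.inl (P.getVert (i + 1)), Sum.inr i)
          ⟨h2, _, _, rfl, hne⟩ i (by simp)
    have hconst : ∀ j, j ≤ P.length → f' (Sum.inl (P.getVert j)) = f' (Sum.inl a) := by
      intro j
      induction j with
      | zero => intro _; rw [SimpleGraph.Walk.getVert_zero]
      | succ k ih =>
        intro hj
        have hk : k < P.length := by omega
        obtain ⟨h1, h2⟩ := hstep ⟨k, hk⟩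
        calc f' (Sum.inl (P.getVert (k + 1))) = f' (Sum.inr ⟨k, hk⟩) := h2
          _ = f' (Sum.inl (P.getVert k)) := h1.symm
          _ = f' (Sum.inl a) := ih (le_of_lt hk)
    set i₀ := f' (Sum.inl a) with hi₀
    apply hPC
    have hmem : ∀ v : ↥{v : V | v ∈ P.support},
        (Sum.inl v.1 : V ⊕ Fin P.length) ∈ f' ⁻¹' {i₀} := by
      rintro ⟨v, hv⟩
      obtain ⟨j, hjv, hjle⟩ := SimpleGraph.Walk.mem_support_iff_exists_getVert.mp hv
      have := hconst j hjle
      rw [hjv] at this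
      simpa using this
    refine closed_embed C hiso hsub _ _
      (fun v => (⟨Sum.inl v.1, hmem v⟩ : ↥(f' ⁻¹' {i₀}))) ?_ ?_ (hparts' i₀)
    · rintro ⟨u, hu⟩ ⟨v, hv⟩ h
      simp only [Subtype.mk.injEq, Sum.inl.injEq] at h
      exact Subtype.ext h
    · rintro ⟨u, hu⟩ ⟨v, hv⟩ h
      simp only [SimpleGraph.comap_adj, Function.Embedding.coe_subtype] at h ⊢
      exact sigma_adj_inl.mpr h
  obtain ⟨e₀, he₀B, i₀, hi₀e⟩ := key
  have hparts : ∀ i : ℕ, C ↥(f ⁻¹' {i}) (G.induce (f ⁻¹' {i})) := by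
    intro i
    refine closed_embed C hiso hsub _ _
      (fun v => (⟨Sum.inl v.1, v.2⟩ : ↥(f' ⁻¹' {i}))) ?_ ?_ (hparts' i)
    · rintro ⟨u, hu⟩ ⟨v, hv⟩ h
      simp only [Subtype.mk.injEq, Sum.inl.injEq] at h
      exact Subtype.ext h
    · rintro ⟨u, hu⟩ ⟨v, hv⟩ h
      simp only [SimpleGraph.comap_adj, Function.Embedding.coe_subtype] at h ⊢
      exact sigma_adj_inl.mpr h
  have h1 : edgeBrittleness C G ≤ (A.ncard : ℕ∞) := sInf_le ⟨f, hparts, rfl⟩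
  have minj : Function.Injective (Sym2.map (Sum.inl : V → V ⊕ Fin P.length)) :=
    Sym2.map.injective Sum.inl_injective
  have himg : Sym2.map Sum.inl '' A ⊆ B := by
    rintro e ⟨e', he', rfl⟩
    obtain ⟨heE, u, v, heq, hne⟩ := he'
    subst heq
    refine ⟨?_, Sum.inl u, Sum.inl v, by simp, hne⟩
    rw [Sym2.map_pair_eq, SimpleGraph.mem_edgeSet] at *
    exact sigma_adj_inl.mpr heE
  have he₀img : e₀ ∉ Sym2.map Sum.inl '' A := by
    rintro ⟨e', _, rfl⟩
    rw [Sym2.mem_map] at hi₀e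
    obtain ⟨y, _, hy⟩ := hi₀e
    exact Sum.inl_ne_inr hy
  have hBfin : B.Finite := Set.toFinite _
  have hAfin : A.Finite := Set.toFinite _
  have hcard : A.ncard + 1 ≤ B.ncard := by
    have hsubs : insert e₀ (Sym2.map Sum.inl '' A) ⊆ B := Set.insert_subset he₀B himg
    have hle := Set.ncard_le_ncard hsubs hBfin
    rwa [Set.ncard_insert_of_notMem he₀img (hAfin.image _),
      Set.ncard_image_of_injective _ minj] at hle
  calc edgeBrittleness C G + 1 ≤ (A.ncard : ℕ∞) + 1 := add_le_add_left h1 1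
    _ = ((A.ncard + 1 : ℕ) : ℕ∞) := by push_cast; ring
    _ ≤ ((B.ncard : ℕ) : ℕ∞) := by exact_mod_cast hcard
    _ = n := hcount
end

section
/- For every positive integer n ≥ 2, the complete bipartite graph K_{2,n} satisfies κ_𝒜(K_{2,n}) = 2 and ν_𝒜(K_{2,n}) ≥ ⌊n/2⌋, where 𝒜 is the class of forests. -/
open Classical SimpleGraph

section Helpers

lemma star_acyclic {V : Type} (G : SimpleGraph V) (w : V)
    (h : ∀ x y, G.Adj x y → x = w ∨ y = w) : G.IsAcyclic := by
  intro v c hc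
  have h3 := hc.three_le_length
  cases c with
  | nil => simp at h3
  | cons h1 p =>
    rename_i a
    cases p with
    | nil => simp at h3
    | cons h2 q =>
      rename_i b
      cases q with
      | nil => simp at h3
      | cons h3' r =>
        rename_i d
        have hnd := hc.2
        simp only [SimpleGraph.Walk.support_cons, List.tail_cons, List.nodup_cons,
          List.mem_cons] at hnd
        obtain ⟨ha, hb, _⟩ := hnd
        push_neg at ha
        have hdr : d ∈ r.support := r.start_mem_support
        have hvr : v ∈ r.support := r.end_mem_support
        rcases h v a h1 with hvw | haw
        · rcases h a b h2 with haw2 | hbw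
          · exact ha.2 ((haw2.trans hvw.symm) ▸ hvr)
          · exact hb ((hbw.trans hvw.symm) ▸ hvr)
        · rcases h b d h3' with hbw | hdw
          · exact ha.1 (hbw.trans haw.symm).symm
          · exact ha.2 ((hdw.trans haw.symm) ▸ hdr)

lemma not_acyclic_of_four {V : Type} (G : SimpleGraph V) (x0 y0 x1 y1 : V)
    (d1 : x0 ≠ y0) (d2 : x0 ≠ x1) (d3 : x0 ≠ y1) (d4 : y0 ≠ x1) (d5 : y0 ≠ y1) (d6 : x1 ≠ y1)
    (a1 : G.Adj x0 y0) (a2 : G.Adj y0 x1) (a3 : G.Adj x1 y1) (a4 : G.Adj y1 x0) :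
    ¬ G.IsAcyclic := by
  intro h
  refine h (SimpleGraph.Walk.cons a1 (SimpleGraph.Walk.cons a2
    (SimpleGraph.Walk.cons a3 (SimpleGraph.Walk.cons a4 SimpleGraph.Walk.nil)))) ?_
  rw [SimpleGraph.Walk.isCycle_def]
  refine ⟨⟨?_⟩, by simp, ?_⟩
  · simp only [SimpleGraph.Walk.edges_cons, SimpleGraph.Walk.edges_nil, List.nodup_cons,
      List.mem_cons, List.not_mem_nil, or_false, List.nodup_nil, and_true, Sym2.eq,
      Sym2.rel_iff', Prod.mk.injEq, Prod.swap_prod_mk]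
    tauto
  · simp only [SimpleGraph.Walk.support_cons, SimpleGraph.Walk.support_nil, List.tail_cons,
      List.nodup_cons, List.mem_cons, List.not_mem_nil, or_false, List.nodup_nil, and_true]
    tauto

lemma partGraph_adj' {V : Type} (G : SimpleGraph V) (g : Sym2 V → ℕ) (i : ℕ)
    (x y : ↥(partSupport G g i)) :
    (partGraph G g i).Adj x y ↔
      (s((x : V), (y : V)) ∈ G.edgeSet ∧ g s((x : V), (y : V)) = i) ∧ (x : V) ≠ (y : V) := by
  unfold partGraph
  simp [SimpleGraph.fromEdgeSet_adj]

lemma K2n_edge {n : ℕ} {e : Sym2 (Fin 2 ⊕ Fin n)} (he : e ∈ (K2n n).edgeSet) :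
    ∃ a b, e = s(Sum.inl a, Sum.inr b) := by
  induction e using Sym2.ind with
  | _ x y =>
    rw [SimpleGraph.mem_edgeSet] at he
    rcases x with a | b <;> rcases y with a' | b'
    · simp [K2n] at he
    · exact ⟨a, b', rfl⟩
    · exact ⟨a', b, Sym2.eq_swap⟩
    · simp [K2n] at he

lemma K2n_edge_mem {n : ℕ} (a : Fin 2) (b : Fin n) :
    s(Sum.inl a, Sum.inr b) ∈ (K2n n).edgeSet := by simp [K2n]

/-- The 4-cycle subgraph of `K2n` on `inl 0, inl 1, inr j, inr k`. -/
def cycSub (n : ℕ) (j k : Fin n) : (K2n n).Subgraph where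
  verts := {Sum.inl 0, Sum.inl 1, Sum.inr j, Sum.inr k}
  Adj x y := ((x = Sum.inl 0 ∨ x = Sum.inl 1) ∧ (y = Sum.inr j ∨ y = Sum.inr k)) ∨
             ((y = Sum.inl 0 ∨ y = Sum.inl 1) ∧ (x = Sum.inr j ∨ x = Sum.inr k))
  adj_sub := by
    rintro x y (⟨h1, h2⟩ | ⟨h1, h2⟩) <;> rcases h1 with rfl | rfl <;>
      rcases h2 with rfl | rfl <;> simp [K2n]
  edge_vert := by
    rintro x y (⟨h1, h2⟩ | ⟨h1, h2⟩) <;> rcases h1 with rfl | rfl <;>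
      rcases h2 with rfl | rfl <;> simp
  symm := ⟨fun x y h => Or.symm h⟩

end Helpers

/-- For `n ≥ 2`, `κ_𝒜(K_{2,n}) = 2` and `ν_𝒜(K_{2,n}) ≥ ⌊n/2⌋`, with `𝒜`
the class of forests. -/
theorem K2n_brittleness_capacity (n : ℕ) (hn : 2 ≤ n) :
    vertexBrittleness ForestClass (K2n n) = 2 ∧
    ((n / 2 : ℕ) : ℕ∞) ≤ capacity ForestClass (K2n n) := by
  have h0n : (0 : ℕ) < n := by omega
  have h1n : (1 : ℕ) < n := by omega
  set i0 : Fin n := ⟨0, h0n⟩ with hi0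
  set i1 : Fin n := ⟨1, h1n⟩ with hi1
  constructor
  · -- vertexBrittleness = 2
    apply le_antisymm
    · -- ≤ 2 : exhibit the labelling by the right endpoint
      set lab : Fin 2 ⊕ Fin n → ℕ := Sum.elim (fun _ => 0) (fun b => (b : ℕ) + 1) with hlab
      set g : Sym2 (Fin 2 ⊕ Fin n) → ℕ :=
        Sym2.lift ⟨fun x y => lab x ⊔ lab y, fun _ _ => sup_comm _ _⟩ with hg
      have hgval : ∀ (a : Fin 2) (b : Fin n), g s(Sum.inl a, Sum.inr b) = (b : ℕ) + 1 := by
        intro a b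
        simp [hg, hlab]
      apply sInf_le
      refine ⟨g, ?_, ?_⟩
      · intro i
        show (partGraph (K2n n) g i).IsAcyclic
        match i with
        | 0 =>
          have hemp : ∀ v, v ∉ partSupport (K2n n) g 0 := by
            rintro v ⟨e, he, hge, hve⟩
            obtain ⟨a, b, rfl⟩ := K2n_edge he
            rw [hgval] at hge
            omega
          exact fun v c hc => (hemp v.1 v.2).elim
        | (j + 1) =>
          by_cases hj : j < n
          · have hw : (Sum.inr ⟨j, hj⟩ : Fin 2 ⊕ Fin n) ∈ partSupport (K2n n) g (j + 1) :=
              ⟨s(Sum.inl 0, Sum.inr ⟨j, hj⟩), K2n_edge_mem _ _, by rw [hgval], by simp⟩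
            apply star_acyclic _ ⟨_, hw⟩
            rintro x y hxy
            rw [partGraph_adj'] at hxy
            obtain ⟨⟨he, hge⟩, hne⟩ := hxy
            obtain ⟨a, b, hab⟩ := K2n_edge he
            rw [hab, hgval] at hge
            have hb : b = ⟨j, hj⟩ := by
              apply Fin.ext
              simp only [Fin.val_mk]
              omega
            rcases Sym2.eq_iff.mp hab with ⟨hx, hy⟩ | ⟨hx, hy⟩
            · right; exact Subtype.ext (by rw [hy, hb])
            · left; exact Subtype.ext (by rw [hx, hb])
          · have hemp : ∀ v, v ∉ partSupport (K2n n) g (j + 1) := by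
              rintro v ⟨e, he, hge, hve⟩
              obtain ⟨a, b, rfl⟩ := K2n_edge he
              rw [hgval] at hge
              have := b.2
              omega
            exact fun v c hc => (hemp v.1 v.2).elim
      · have hBeq : brittleVertices (K2n n) g =
            {Sum.inl 0, Sum.inl 1} := by
          ext v
          constructor
          · rintro ⟨e, e', he, he', hv, hv', hne⟩
            obtain ⟨a, b, rfl⟩ := K2n_edge he
            obtain ⟨a', b', rfl⟩ := K2n_edge he'
            rw [hgval, hgval] at hne
            rw [Sym2.mem_iff] at hv hv'
            rcases hv with rfl | rfl
            · have : a = 0 ∨ a = 1 := by omega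
              rcases this with rfl | rfl <;> simp
            · rcases hv' with hv' | hv'
              · exact absurd hv' (by simp)
              · rw [Sum.inr.injEq] at hv'
                rw [hv'] at hne
                exact absurd rfl hne
          · intro hv
            simp only [Set.mem_insert_iff, Set.mem_singleton_iff] at hv
            rcases hv with rfl | rfl
            · exact ⟨s(Sum.inl 0, Sum.inr i0), s(Sum.inl 0, Sum.inr i1),
                K2n_edge_mem _ _, K2n_edge_mem _ _, by simp, by simp,
                by rw [hgval, hgval]; simp [hi0, hi1]⟩
            · exact ⟨s(Sum.inl 1, Sum.inr i0), s(Sum.inl 1, Sum.inr i1),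
                K2n_edge_mem _ _, K2n_edge_mem _ _, by simp, by simp,
                by rw [hgval, hgval]; simp [hi0, hi1]⟩
        rw [hBeq, Set.ncard_pair (by simp)]
        rfl
    · -- ≥ 2
      apply le_sInf
      rintro x ⟨g, hfor, rfl⟩
      by_contra hlt
      push_neg at hlt
      rw [show (2 : ℕ∞) = ((2 : ℕ) : ℕ∞) from rfl, Nat.cast_lt] at hlt
      have hone : ∀ a ∈ brittleVertices (K2n n) g, ∀ b ∈ brittleVertices (K2n n) g, a = b :=
        (Set.ncard_le_one (Set.toFinite _)).mp (by omega)
      have hnb : ∀ v, v ∉ brittleVertices (K2n n) g → ∀ e e', e ∈ (K2n n).edgeSet →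
          e' ∈ (K2n n).edgeSet → v ∈ e → v ∈ e' → g e = g e' := by
        intro v hv e e' he he' h1 h2
        by_contra hne
        exact hv ⟨e, e', he, he', h1, h2, hne⟩
      have he1 := K2n_edge_mem (n := n) 0 i0
      have he2 := K2n_edge_mem (n := n) 1 i0
      have he3 := K2n_edge_mem (n := n) 1 i1
      have he4 := K2n_edge_mem (n := n) 0 i1
      have d01 : (Sum.inl 0 : Fin 2 ⊕ Fin n) ≠ Sum.inl 1 := by simp
      have d0r0 : (Sum.inl 0 : Fin 2 ⊕ Fin n) ≠ Sum.inr i0 := by simp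
      have d0r1 : (Sum.inl 0 : Fin 2 ⊕ Fin n) ≠ Sum.inr i1 := by simp
      have d1r0 : (Sum.inl 1 : Fin 2 ⊕ Fin n) ≠ Sum.inr i0 := by simp
      have d1r1 : (Sum.inl 1 : Fin 2 ⊕ Fin n) ≠ Sum.inr i1 := by simp
      have dr : (Sum.inr i0 : Fin 2 ⊕ Fin n) ≠ Sum.inr i1 := by
        simp [hi0, hi1]
      have k0 : (Sum.inl 0 : Fin 2 ⊕ Fin n) ∉ brittleVertices (K2n n) g →
          g s(Sum.inl 0, Sum.inr i1) = g s(Sum.inl 0, Sum.inr i0) :=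
        fun h => hnb _ h _ _ he4 he1 (by simp) (by simp)
      have k1 : (Sum.inr i0 : Fin 2 ⊕ Fin n) ∉ brittleVertices (K2n n) g →
          g s(Sum.inl 0, Sum.inr i0) = g s(Sum.inl 1, Sum.inr i0) :=
        fun h => hnb _ h _ _ he1 he2 (by simp) (by simp)
      have k2 : (Sum.inl 1 : Fin 2 ⊕ Fin n) ∉ brittleVertices (K2n n) g →
          g s(Sum.inl 1, Sum.inr i0) = g s(Sum.inl 1, Sum.inr i1) :=
        fun h => hnb _ h _ _ he2 he3 (by simp) (by simp)
      have k3 : (Sum.inr i1 : Fin 2 ⊕ Fin n) ∉ brittleVertices (K2n n) g →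
          g s(Sum.inl 1, Sum.inr i1) = g s(Sum.inl 0, Sum.inr i1) :=
        fun h => hnb _ h _ _ he3 he4 (by simp) (by simp)
      have hall : g s(Sum.inl 0, Sum.inr i0) = g s(Sum.inl 1, Sum.inr i0) ∧
          g s(Sum.inl 1, Sum.inr i0) = g s(Sum.inl 1, Sum.inr i1) ∧
          g s(Sum.inl 1, Sum.inr i1) = g s(Sum.inl 0, Sum.inr i1) := by
        by_cases b0 : (Sum.inl 0 : Fin 2 ⊕ Fin n) ∈ brittleVertices (K2n n) g
        · have n1 : (Sum.inl 1 : Fin 2 ⊕ Fin n) ∉ brittleVertices (K2n n) g :=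
            fun h => d01 (hone _ b0 _ h)
          have n2 : (Sum.inr i0 : Fin 2 ⊕ Fin n) ∉ brittleVertices (K2n n) g :=
            fun h => d0r0 (hone _ b0 _ h)
          have n3 : (Sum.inr i1 : Fin 2 ⊕ Fin n) ∉ brittleVertices (K2n n) g :=
            fun h => d0r1 (hone _ b0 _ h)
          exact ⟨k1 n2, k2 n1, k3 n3⟩
        · by_cases b1 : (Sum.inl 1 : Fin 2 ⊕ Fin n) ∈ brittleVertices (K2n n) g
          · have n2 : (Sum.inr i0 : Fin 2 ⊕ Fin n) ∉ brittleVertices (K2n n) g :=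
              fun h => d1r0 (hone _ b1 _ h)
            have n3 : (Sum.inr i1 : Fin 2 ⊕ Fin n) ∉ brittleVertices (K2n n) g :=
              fun h => d1r1 (hone _ b1 _ h)
            have q0 := k0 b0
            have q1 := k1 n2
            have q3 := k3 n3
            exact ⟨q1, by omega, q3⟩
          · by_cases b2 : (Sum.inr i0 : Fin 2 ⊕ Fin n) ∈ brittleVertices (K2n n) g
            · have n3 : (Sum.inr i1 : Fin 2 ⊕ Fin n) ∉ brittleVertices (K2n n) g :=
                fun h => dr (hone _ b2 _ h)
              have q0 := k0 b0
              have q2 := k2 b1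
              have q3 := k3 n3
              exact ⟨by omega, q2, q3⟩
            · have q0 := k0 b0
              have q1 := k1 b2
              have q2 := k2 b1
              exact ⟨q1, q2, by omega⟩
      -- all four edges get the same label; this part is not a forest.
      have hforI : (partGraph (K2n n) g (g s(Sum.inl 0, Sum.inr i0))).IsAcyclic :=
        hfor _
      have m0 : (Sum.inl 0 : Fin 2 ⊕ Fin n) ∈
          partSupport (K2n n) g (g s(Sum.inl 0, Sum.inr i0)) := ⟨_, he1, rfl, by simp⟩
      have m1 : (Sum.inr i0 : Fin 2 ⊕ Fin n) ∈
          partSupport (K2n n) g (g s(Sum.inl 0, Sum.inr i0)) := ⟨_, he1, rfl, by simp⟩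
      have m2 : (Sum.inl 1 : Fin 2 ⊕ Fin n) ∈
          partSupport (K2n n) g (g s(Sum.inl 0, Sum.inr i0)) :=
        ⟨_, he2, hall.1.symm, by simp⟩
      have m3 : (Sum.inr i1 : Fin 2 ⊕ Fin n) ∈
          partSupport (K2n n) g (g s(Sum.inl 0, Sum.inr i0)) :=
        ⟨_, he3, (hall.1.trans hall.2.1).symm, by simp⟩
      refine not_acyclic_of_four _ ⟨_, m0⟩ ⟨_, m1⟩ ⟨_, m2⟩ ⟨_, m3⟩
        (Subtype.coe_ne_coe.mp d0r0) (Subtype.coe_ne_coe.mp d01)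
        (Subtype.coe_ne_coe.mp d0r1) (Subtype.coe_ne_coe.mp (Ne.symm d1r0))
        (Subtype.coe_ne_coe.mp dr) (Subtype.coe_ne_coe.mp d1r1)
        ?_ ?_ ?_ ?_ hforI
      · exact (partGraph_adj' _ _ _ _ _).mpr ⟨⟨he1, rfl⟩, d0r0⟩
      · refine (partGraph_adj' _ _ _ _ _).mpr ⟨?_, Ne.symm d1r0⟩
        rw [Sym2.eq_swap]
        exact ⟨he2, hall.1.symm⟩
      · exact (partGraph_adj' _ _ _ _ _).mpr
          ⟨⟨he3, (hall.1.trans hall.2.1).symm⟩, d1r1⟩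
      · refine (partGraph_adj' _ _ _ _ _).mpr ⟨?_, Ne.symm d0r1⟩
        rw [Sym2.eq_swap]
        exact ⟨he4, (hall.1.trans (hall.2.1.trans hall.2.2)).symm⟩
  · -- capacity
    apply le_sSup
    refine ⟨n / 2, rfl,
      fun i => cycSub n ⟨2 * i.val, by have := i.2; omega⟩
        ⟨2 * i.val + 1, by have := i.2; omega⟩, ?_, ?_⟩
    · intro i j hij
      have hvij : (i : ℕ) ≠ (j : ℕ) := fun h => hij (Fin.ext h)
      rw [Set.disjoint_left]
      intro e hei hej
      induction e using Sym2.ind with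
      | _ x y =>
        rw [SimpleGraph.Subgraph.mem_edgeSet] at hei hej
        rcases hei with ⟨hx, hy⟩ | ⟨hy, hx⟩ <;> rcases hej with ⟨hx', hy'⟩ | ⟨hy', hx'⟩
        · rcases hy with rfl | rfl <;> rcases hy' with h | h <;>
            simp only [Sum.inr.injEq, Fin.mk.injEq] at h <;> omega
        · rcases hx with rfl | rfl <;> rcases hx' with h | h <;> simp at h
        · rcases hx with rfl | rfl <;> rcases hx' with h | h <;> simp at h
        · rcases hx with rfl | rfl <;> rcases hx' with h | h <;>
            simp only [Sum.inr.injEq, Fin.mk.injEq] at h <;> omega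
    · intro i
      have hlt1 : 2 * i.val < n := by have := i.2; omega
      have hlt2 : 2 * i.val + 1 < n := by have := i.2; omega
      show ¬ (cycSub n ⟨2 * i.val, hlt1⟩ ⟨2 * i.val + 1, hlt2⟩).coe.IsAcyclic
      refine not_acyclic_of_four _
        ⟨Sum.inl 0, by simp [cycSub]⟩
        ⟨Sum.inr ⟨2 * i.val, hlt1⟩, by simp [cycSub]⟩
        ⟨Sum.inl 1, by simp [cycSub]⟩
        ⟨Sum.inr ⟨2 * i.val + 1, hlt2⟩, by simp [cycSub]⟩
        (Subtype.coe_ne_coe.mp (by simp))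
        (Subtype.coe_ne_coe.mp (by simp))
        (Subtype.coe_ne_coe.mp (by simp))
        (Subtype.coe_ne_coe.mp (by simp))
        (Subtype.coe_ne_coe.mp (by simp [Fin.ext_iff]))
        (Subtype.coe_ne_coe.mp (by simp))
        ?_ ?_ ?_ ?_
      · exact Or.inl ⟨Or.inl rfl, Or.inl rfl⟩
      · exact Or.inr ⟨Or.inr rfl, Or.inl rfl⟩
      · exact Or.inl ⟨Or.inr rfl, Or.inr rfl⟩
      · exact Or.inr ⟨Or.inl rfl, Or.inr rfl⟩
end
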